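/- arXiv:2108.07042 — 4 statements merged into one kernel-verified Lean document; each statement's English description precedes it below -/
import Mathlib

section
/- Let A be a finite set of k ≥ 2 integers with 0 ∈ A, and let α be an integer with 0 ≤ α ≤ k. Then |Σ_α(A)| ≥ ⌊k²/4⌋ − α(α−1)/2 + 1. -/
def tri : ℕ → ℕ
  | 0 => 0
  | (n+1) => tri n + (n+1)

def gg (q s0 : ℕ) : ℕ := if s0 = 0 then tri q + 1 else tri (q - s0 + 1)

def TT (P : Finset ℤ) (s0 : ℕ) : Finset ℤ :=
  (P.powerset.filter (fun B => s0 ≤ B.card)).image (fun B => B.sum id)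

lemma mem_TT {P : Finset ℤ} {s0 : ℕ} {x : ℤ} :
    x ∈ TT P s0 ↔ ∃ B : Finset ℤ, B ⊆ P ∧ s0 ≤ B.card ∧ B.sum id = x := by
  simp [TT, Finset.mem_image, Finset.mem_filter, Finset.mem_powerset]
  tauto

lemma TT_mono {P P' : Finset ℤ} {s0 : ℕ} (h : P' ⊆ P) : TT P' s0 ⊆ TT P s0 := by
  intro x hx
  rw [mem_TT] at hx ⊢
  obtain ⟨B, hB, h1, h2⟩ := hx
  exact ⟨B, hB.trans h, h1, h2⟩

lemma TT_le_sum {P : Finset ℤ} (hP : ∀ x ∈ P, 0 ≤ x) {s0 : ℕ} {x : ℤ} (hx : x ∈ TT P s0) :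
    x ≤ P.sum id := by
  rw [mem_TT] at hx
  obtain ⟨B, hB, _, h2⟩ := hx
  rw [← h2]
  exact Finset.sum_le_sum_of_subset_of_nonneg hB (fun i hi _ => hP i hi)

lemma gg_step (n s0 : ℕ) (h : s0 ≤ n) : gg (n+1) s0 ≤ gg n s0 + (n+1) := by
  unfold gg
  rcases Nat.eq_zero_or_pos s0 with h0 | h0
  · subst h0; simp [tri]
  · have h1 : s0 ≠ 0 := h0.ne'
    rw [if_neg h1, if_neg h1]
    have e1 : n + 1 - s0 + 1 = (n - s0 + 1) + 1 := by omega
    rw [e1, tri]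
    omega

lemma chain : ∀ (n : ℕ) (P : Finset ℤ), P.card = n → (∀ x ∈ P, 0 < x) →
    ∀ s0, s0 ≤ n → gg n s0 ≤ (TT P s0).card := by
  intro n
  induction n with
  | zero =>
    intro P hP _ s0 hs0
    interval_cases s0
    have : P = ∅ := Finset.card_eq_zero.mp hP
    subst this
    have h1 : (0:ℤ) ∈ TT ∅ 0 := mem_TT.mpr ⟨∅, by simp⟩
    have := Finset.card_pos.mpr ⟨0, h1⟩
    have hg : gg 0 0 = 1 := by simp [gg, tri]
    omega
  | succ n ih =>
    intro P hP hpos s0 hs0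
    rcases Nat.lt_or_ge s0 (n+1) with hlt | hge
    · -- s0 ≤ n, inductive step
      have hne : P.Nonempty := Finset.card_pos.mp (by omega)
      set M := P.max' hne with hM
      have hMmem : M ∈ P := P.max'_mem hne
      set P' := P.erase M with hP'
      have hP'card : P'.card = n := by
        rw [hP', Finset.card_erase_of_mem hMmem, hP]
        omega
      have hP'pos : ∀ x ∈ P', 0 < x := fun x hx => hpos x (Finset.mem_of_mem_erase hx)
      have hIH := ih P' hP'card hP'pos s0 (by omega)
      -- the new elements
      set D : Finset ℤ := (insert (0:ℤ) P').image (fun c => P.sum id - c) with hD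
      have hDcard : D.card = n + 1 := by
        rw [hD, Finset.card_image_of_injective _ (fun a b hab => by omega)]
        rw [Finset.card_insert_of_notMem (fun h => absurd (hP'pos 0 h) (by norm_num)), hP'card]
      have hsumP : P'.sum id + M = P.sum id := by
        rw [hP']
        rw [Finset.sum_erase_eq_sub hMmem]
        simp [id]
      -- D ⊆ TT P s0
      have hDsub : D ⊆ TT P s0 := by
        intro x hx
        rw [hD, Finset.mem_image] at hx
        obtain ⟨c, hc, hcx⟩ := hx
        rcases Finset.mem_insert.mp hc with h0 | hcP'
        · subst h0
          rw [mem_TT]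
          exact ⟨P, Finset.Subset.refl P, by omega, by omega⟩
        · rw [mem_TT]
          refine ⟨P.erase c, Finset.erase_subset _ _, ?_, ?_⟩
          · rw [Finset.card_erase_of_mem (Finset.mem_of_mem_erase hcP'), hP]; omega
          · rw [Finset.sum_erase_eq_sub (Finset.mem_of_mem_erase hcP')]
            simpa using hcx
      -- D is disjoint from TT P' s0
      have hDbig : ∀ x ∈ D, P'.sum id < x := by
        intro x hx
        rw [hD, Finset.mem_image] at hx
        obtain ⟨c, hc, hcx⟩ := hx
        have hcM : c < M := by
          rcases Finset.mem_insert.mp hc with h0 | hcP'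
          · subst h0; exact hpos M hMmem
          · have := P.le_max' c (Finset.mem_of_mem_erase hcP')
            have hne' : c ≠ M := Finset.ne_of_mem_erase hcP'
            omega
        omega
      have hdisj : Disjoint D (TT P' s0) := by
        rw [Finset.disjoint_left]
        intro x hxD hxT
        have h1 := hDbig x hxD
        have h2 := TT_le_sum (fun y hy => (hP'pos y hy).le) hxT
        omega
      have hsub : D ∪ TT P' s0 ⊆ TT P s0 :=
        Finset.union_subset hDsub (TT_mono (Finset.erase_subset _ _))
      have hcard : gg n s0 + (n+1) ≤ (TT P s0).card := by
        have hu := Finset.card_union_of_disjoint hdisj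
        have hle := Finset.card_le_card hsub
        omega
      have := gg_step n s0 (by omega)
      omega
    · -- s0 = n+1
      have hs : s0 = n + 1 := by omega
      subst hs
      have h1 : P.sum id ∈ TT P (n+1) :=
        mem_TT.mpr ⟨P, Finset.Subset.refl P, by omega, rfl⟩
      have h2 := Finset.card_pos.mpr ⟨_, h1⟩
      have : gg (n+1) (n+1) = 1 := by
        unfold gg
        simp [tri]
      omega

lemma tri_two (n : ℕ) : 2 * tri n = n * (n + 1) := by
  induction n with
  | zero => rfl
  | succ n ih => rw [tri, Nat.mul_add, ih]; ring

set_option maxHeartbeats 800000 in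
lemma numeric (q m α : ℕ) (h2 : α ≤ q + m + 1) :
    ((q:ℤ)+(m:ℤ)+1)^2/4 - (α:ℤ)*((α:ℤ)-1)/2 + 1 ≤
      (gg q (α-1-m) : ℤ) + (gg m (α-1-q) : ℤ) - 1 := by
  have tri2 : ∀ n : ℕ, 2 * ((tri n : ℤ)) = (n:ℤ) * ((n:ℤ)+1) := by
    intro n; exact_mod_cast tri_two n
  -- floor value of k^2/4
  set kz : ℤ := (q:ℤ)+(m:ℤ)+1 with hkz
  have hK : 4 * (kz^2/4) = kz^2 - kz % 2 := by
    obtain ⟨c, hc⟩ | ⟨c, hc⟩ := Int.even_or_odd kz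
    · rw [hc]
      have h : (c+c)^2 = 4*(c^2) := by ring
      rw [h]
      generalize c^2 = d
      omega
    · rw [hc]
      have h : (2*c+1)^2 = 4*(c^2+c)+1 := by ring
      rw [h]
      generalize c^2+c = d
      omega
  -- exact value of α(α-1)/2
  have hT : 2 * ((α:ℤ)*((α:ℤ)-1)/2) = (α:ℤ)*((α:ℤ)-1) := by
    have he : Even ((α:ℤ)*((α:ℤ)-1)) := by
      have h := Int.even_mul_succ_self ((α:ℤ)-1)
      have : ((α:ℤ)-1)*(((α:ℤ)-1)+1) = (α:ℤ)*((α:ℤ)-1) := by ring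
      rwa [this] at h
    exact Int.two_mul_ediv_two_of_even he
  have hr : 0 ≤ kz % 2 ∧ kz % 2 < 2 := by constructor <;> omega
  have hnn : 0 ≤ (α:ℤ) * ((α:ℤ)-1) := by
    rcases Nat.eq_zero_or_pos α with h | h
    · simp [h]
    · have : (1:ℤ) ≤ (α:ℤ) := by exact_mod_cast h
      nlinarith
  have key : 1 - kz % 2 ≤ ((q:ℤ)-(m:ℤ))^2 := by
    rcases eq_or_ne q m with h | h
    · subst h
      have h1 : kz % 2 = 1 := by omega
      rw [h1]
      positivity
    · have h' : (q:ℤ) - m ≠ 0 := by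
        intro hq
        apply h
        omega
      have h1 : 1 ≤ ((q:ℤ)-(m:ℤ))^2 := by
        rcases h'.lt_or_gt with hl | hl <;> nlinarith
      omega
  rcases le_or_gt α (m+1) with hA | hA <;> rcases le_or_gt α (q+1) with hB | hB
  · -- both thresholds zero
    have e1 : α - 1 - m = 0 := by omega
    have e2 : α - 1 - q = 0 := by omega
    rw [e1, e2]
    have g1 : gg q 0 = tri q + 1 := by simp [gg]
    have g2 : gg m 0 = tri m + 1 := by simp [gg]
    rw [g1, g2]
    push_cast
    have t1 := tri2 q
    have t2 := tri2 m
    have main : kz^2 - kz%2 - 2*((α:ℤ)*((α:ℤ)-1)) + 8 ≤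
        4*((tri q : ℤ) + (tri m : ℤ) + 2) := by
      nlinarith [key, hnn]
    linarith [hK, hT, main]
  · -- α ≥ q+2, α ≤ m+1
    have e1 : α - 1 - m = 0 := by omega
    rw [e1]
    have g1 : gg q 0 = tri q + 1 := by simp [gg]
    have e2 : α - 1 - q ≠ 0 := by omega
    have g2 : gg m (α-1-q) = tri (q+m+2-α) := by
      rw [gg, if_neg e2]
      congr 1
      omega
    rw [g1, g2]
    have hu : ((q+m+2-α : ℕ) : ℤ) = (q:ℤ)+(m:ℤ)+2-(α:ℤ) := by
      have : α ≤ q+m+2 := by omega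
      push_cast [Nat.cast_sub this]
      ring
    push_cast
    have t1 := tri2 q
    have t2 := tri2 (q+m+2-α)
    rw [hu] at t2
    have hα1 : (q:ℤ)+2 ≤ (α:ℤ) := by exact_mod_cast hB
    have hα2 : (α:ℤ) ≤ (m:ℤ)+1 := by exact_mod_cast hA
    have main : kz^2 - kz%2 - 2*((α:ℤ)*((α:ℤ)-1)) + 8 ≤
        4*((tri q : ℤ) + (tri (q+m+2-α) : ℤ) + 1) := by
      nlinarith [sq_nonneg (2*(α:ℤ)-(q:ℤ)-(m:ℤ)-3), hr.1]
    linarith [hK, hT, main]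
  · -- α ≥ m+2, α ≤ q+1
    have e2 : α - 1 - q = 0 := by omega
    rw [e2]
    have g2 : gg m 0 = tri m + 1 := by simp [gg]
    have e1 : α - 1 - m ≠ 0 := by omega
    have g1 : gg q (α-1-m) = tri (q+m+2-α) := by
      rw [gg, if_neg e1]
      congr 1
      omega
    rw [g1, g2]
    have hu : ((q+m+2-α : ℕ) : ℤ) = (q:ℤ)+(m:ℤ)+2-(α:ℤ) := by
      have : α ≤ q+m+2 := by omega
      push_cast [Nat.cast_sub this]
      ring
    push_cast
    have t1 := tri2 m
    have t2 := tri2 (q+m+2-α)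
    rw [hu] at t2
    have hα1 : (m:ℤ)+2 ≤ (α:ℤ) := by exact_mod_cast hA
    have hα2 : (α:ℤ) ≤ (q:ℤ)+1 := by exact_mod_cast hB
    have main : kz^2 - kz%2 - 2*((α:ℤ)*((α:ℤ)-1)) + 8 ≤
        4*((tri (q+m+2-α) : ℤ) + (tri m : ℤ) + 1) := by
      nlinarith [sq_nonneg (2*(α:ℤ)-(q:ℤ)-(m:ℤ)-3), hr.1]
    linarith [hK, hT, main]
  · -- both thresholds positive
    have e1 : α - 1 - m ≠ 0 := by omega
    have e2 : α - 1 - q ≠ 0 := by omega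
    have g1 : gg q (α-1-m) = tri (q+m+2-α) := by
      rw [gg, if_neg e1]; congr 1; omega
    have g2 : gg m (α-1-q) = tri (q+m+2-α) := by
      rw [gg, if_neg e2]; congr 1; omega
    rw [g1, g2]
    have hu : ((q+m+2-α : ℕ) : ℤ) = (q:ℤ)+(m:ℤ)+2-(α:ℤ) := by
      have : α ≤ q+m+2 := by omega
      push_cast [Nat.cast_sub this]
      ring
    push_cast
    have t2 := tri2 (q+m+2-α)
    rw [hu] at t2
    have hα1 : (m:ℤ)+2 ≤ (α:ℤ) := by exact_mod_cast hA
    have hα2 : (q:ℤ)+2 ≤ (α:ℤ) := by exact_mod_cast hB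
    have hα3 : (α:ℤ) ≤ (q:ℤ)+(m:ℤ)+1 := by exact_mod_cast h2
    have main : kz^2 - kz%2 - 2*((α:ℤ)*((α:ℤ)-1)) + 8 ≤
        4*(2*(tri (q+m+2-α) : ℤ)) := by
      nlinarith [sq_nonneg (2*(α:ℤ)-(q:ℤ)-(m:ℤ)-4), hr.1]
    linarith [hK, hT, main]


/-- `sigmaAtLeast A α` is the set of all subset sums of `A` coming from
subsets of size at least `α`. -/
def sigmaAtLeast (A : Finset ℤ) (α : ℕ) : Finset ℤ :=
  (A.powerset.filter (fun B => α ≤ B.card)).image (fun B => B.sum id)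

lemma TT_le_sum' {P : Finset ℤ} (hP : ∀ x ∈ P, 0 ≤ x) {s0 : ℕ} {x : ℤ} (hx : x ∈ TT P s0) :
    x ≤ P.sum id := by
  rw [mem_TT] at hx
  obtain ⟨B, hB, _, h2⟩ := hx
  rw [← h2]
  exact Finset.sum_le_sum_of_subset_of_nonneg hB (fun i hi _ => hP i hi)

theorem stmt_12 (k α : ℕ) (hk : 2 ≤ k) (A : Finset ℤ) (hcard : A.card = k)
    (h0 : (0 : ℤ) ∈ A) (hα : α ≤ k) :
    ((sigmaAtLeast A α).card : ℤ) ≥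
      (k : ℤ) ^ 2 / 4 - (α : ℤ) * ((α : ℤ) - 1) / 2 + 1 := by
  classical
  set P := A.filter (fun x => 0 < x) with hPdef
  set N := A.filter (fun x => x < 0) with hNdef
  set q := P.card with hq
  set m := N.card with hm
  have hPsub : P ⊆ A := Finset.filter_subset _ _
  have hNsub : N ⊆ A := Finset.filter_subset _ _
  have hposP : ∀ x ∈ P, 0 < x := fun x hx => (Finset.mem_filter.mp hx).2
  have hnegN : ∀ x ∈ N, x < 0 := fun x hx => (Finset.mem_filter.mp hx).2
  have hdisjPN : Disjoint P N := by
    rw [Finset.disjoint_left]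
    intro x hx hx'
    have := hposP x hx
    have := hnegN x hx'
    omega
  have hunion : P ∪ N = A.erase 0 := by
    ext x
    simp only [Finset.mem_union, Finset.mem_erase, hPdef, hNdef, Finset.mem_filter]
    constructor
    · rintro (⟨h1, h2⟩ | ⟨h1, h2⟩) <;> exact ⟨by omega, h1⟩
    · rintro ⟨h1, h2⟩
      rcases lt_trichotomy x 0 with h | h | h
      · exact Or.inr ⟨h2, h⟩
      · omega
      · exact Or.inl ⟨h2, h⟩
  have hk' : q + m + 1 = k := by
    have h1 : (P ∪ N).card = q + m := Finset.card_union_of_disjoint hdisjPN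
    have h2 : (A.erase 0).card = k - 1 := by
      rw [Finset.card_erase_of_mem h0, hcard]
    rw [hunion, h2] at h1
    omega
  set s0 := α - 1 - m with hs0
  set t0 := α - 1 - q with ht0
  -- positive side
  have hTP := chain q P rfl hposP s0 (by omega)
  -- negative side via negation
  set N' := N.image (fun x : ℤ => -x) with hN'
  have hN'card : N'.card = m := Finset.card_image_of_injective _ neg_injective
  have hN'pos : ∀ x ∈ N', 0 < x := by
    intro x hx
    rw [hN', Finset.mem_image] at hx
    obtain ⟨y, hy, rfl⟩ := hx
    have := hnegN y hy
    omega
  have hTN' := chain m N' hN'card hN'pos t0 (by omega)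
  have hsubneg : TT N' t0 ⊆ (TT N t0).image (fun x : ℤ => -x) := by
    intro y hy
    rw [mem_TT] at hy
    obtain ⟨C', hC'sub, hC'card, hC'sum⟩ := hy
    refine Finset.mem_image.mpr ⟨-y, ?_, neg_neg y⟩
    rw [mem_TT]
    refine ⟨C'.image (fun x : ℤ => -x), ?_, ?_, ?_⟩
    · have h1 := Finset.image_subset_image (f := fun x : ℤ => -x) hC'sub
      rwa [hN', Finset.image_image, show ((fun x : ℤ => -x) ∘ (fun x : ℤ => -x)) = id by
        funext z; simp, Finset.image_id] at h1
    · rw [Finset.card_image_of_injective _ neg_injective]; exact hC'card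
    · rw [Finset.sum_image (fun a _ b _ h => neg_injective h)]
      rw [← hC'sum]
      exact Finset.sum_neg_distrib (f := (id : ℤ → ℤ)) (s := C')
  have hTN : gg m t0 ≤ (TT N t0).card := by
    calc gg m t0 ≤ (TT N' t0).card := hTN'
    _ ≤ ((TT N t0).image (fun x : ℤ => -x)).card := Finset.card_le_card hsubneg
    _ ≤ (TT N t0).card := Finset.card_image_le
  set SP := P.sum id with hSP
  set SN := N.sum id with hSN
  -- bounds
  have hboundP : ∀ x ∈ TT P s0, x ≤ SP := fun x hx =>
    TT_le_sum' (fun y hy => (hposP y hy).le) hx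
  have hboundN : ∀ y ∈ TT N t0, SN ≤ y := by
    intro y hy
    rw [mem_TT] at hy
    obtain ⟨C, hC, _, h2⟩ := hy
    have h3 : (N \ C).sum id + C.sum id = N.sum id := Finset.sum_sdiff hC
    have h4 : (N \ C).sum id ≤ 0 :=
      Finset.sum_nonpos (fun x hx => (hnegN x (Finset.mem_sdiff.mp hx).1).le)
    omega
  -- memberships
  have hmem1 : ∀ x ∈ TT P s0, x + SN ∈ sigmaAtLeast A α := by
    intro x hx
    rw [mem_TT] at hx
    obtain ⟨B, hB, hBcard, hBsum⟩ := hx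
    have h0nB : (0:ℤ) ∉ B ∪ N := by
      intro h
      rcases Finset.mem_union.mp h with h | h
      · exact absurd (hposP 0 (hB h)) (by norm_num)
      · exact absurd (hnegN 0 h) (by norm_num)
    have hdBN : Disjoint B N := hdisjPN.mono_left hB
    refine Finset.mem_image.mpr ⟨insert 0 (B ∪ N), Finset.mem_filter.mpr ⟨?_, ?_⟩, ?_⟩
    · rw [Finset.mem_powerset]
      refine Finset.insert_subset h0 (Finset.union_subset (hB.trans hPsub) hNsub)
    · rw [Finset.card_insert_of_notMem h0nB, Finset.card_union_of_disjoint hdBN]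
      omega
    · rw [Finset.sum_insert h0nB, Finset.sum_union hdBN, hBsum]
      rw [hSN]
      simp [id]
  have hmem2 : ∀ y ∈ TT N t0, y + SP ∈ sigmaAtLeast A α := by
    intro y hy
    rw [mem_TT] at hy
    obtain ⟨C, hC, hCcard, hCsum⟩ := hy
    have h0nC : (0:ℤ) ∉ C ∪ P := by
      intro h
      rcases Finset.mem_union.mp h with h | h
      · exact absurd (hnegN 0 (hC h)) (by norm_num)
      · exact absurd (hposP 0 h) (by norm_num)
    have hdCP : Disjoint C P := (hdisjPN.symm).mono_left hC
    refine Finset.mem_image.mpr ⟨insert 0 (C ∪ P), Finset.mem_filter.mpr ⟨?_, ?_⟩, ?_⟩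
    · rw [Finset.mem_powerset]
      refine Finset.insert_subset h0 (Finset.union_subset (hC.trans hNsub) hPsub)
    · rw [Finset.card_insert_of_notMem h0nC, Finset.card_union_of_disjoint hdCP]
      omega
    · rw [Finset.sum_insert h0nC, Finset.sum_union hdCP, hCsum]
      rw [hSP]
      simp [id]
  -- the two chains
  set C1 := (TT P s0).image (fun x => x + SN) with hC1
  set C2 := (TT N t0).image (fun y => y + SP) with hC2
  have hC1card : C1.card = (TT P s0).card :=
    Finset.card_image_of_injective _ (add_left_injective SN)
  have hC2card : C2.card = (TT N t0).card :=
    Finset.card_image_of_injective _ (add_left_injective SP)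
  have hC1sub : C1 ⊆ sigmaAtLeast A α := by
    intro z hz
    obtain ⟨x, hx, rfl⟩ := Finset.mem_image.mp hz
    exact hmem1 x hx
  have hC2sub : C2 ⊆ sigmaAtLeast A α := by
    intro z hz
    obtain ⟨y, hy, rfl⟩ := Finset.mem_image.mp hz
    exact hmem2 y hy
  have hinter : (C1 ∩ C2).card ≤ 1 := by
    rw [Finset.card_le_one]
    have hval : ∀ z ∈ C1 ∩ C2, z = SP + SN := by
      intro z hz
      obtain ⟨hz1, hz2⟩ := Finset.mem_inter.mp hz
      obtain ⟨x, hx, rfl⟩ := Finset.mem_image.mp hz1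
      obtain ⟨y, hy, he⟩ := Finset.mem_image.mp hz2
      have h1 := hboundP x hx
      have h2 := hboundN y hy
      omega
    intro a ha b hb
    rw [hval a ha, hval b hb]
  have hunioncard : gg q s0 + gg m t0 - 1 ≤ (sigmaAtLeast A α).card := by
    have h1 := Finset.card_union_add_card_inter C1 C2
    have h2 : (C1 ∪ C2).card ≤ (sigmaAtLeast A α).card :=
      Finset.card_le_card (Finset.union_subset hC1sub hC2sub)
    omega
  -- conclude
  have hnum := numeric q m α (by omega)
  have hcast : ((k:ℤ)) = (q:ℤ) + (m:ℤ) + 1 := by exact_mod_cast hk'.symm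
  rw [ge_iff_le, hcast]
  have hgg1 : 1 ≤ gg q s0 := by
    unfold gg
    split
    · omega
    · rw [tri]
      omega
  calc ((q:ℤ)+(m:ℤ)+1)^2/4 - (α:ℤ)*((α:ℤ)-1)/2 + 1
      ≤ (gg q s0 : ℤ) + (gg m t0 : ℤ) - 1 := hnum
    _ ≤ ((sigmaAtLeast A α).card : ℤ) := by
        have := hunioncard
        have h1 : 1 ≤ gg q s0 + gg m t0 := by
          have : 1 ≤ gg q s0 := hgg1
          omega
        push_cast
        omega
end

section
/- Let k ≥ 2, r ≥ 1, and α be integers with 0 ≤ α ≤ rk − 1, and let m ∈ [1, k] be the integer with (m−1)r ≤ α < mr. Let A be a set of k distinct integers with A ∩ (−A) = ∅, and let 𝒜 be the multiset consisting of each element of A with multiplicity exactly r. Then |Σ_α(𝒜)| ≥ r(k(k+1)/2 − m(m+1)/2) + m(mr − α) + 1. -/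
/-- `sigmaSeqAtLeast A r α` is the set of all subsequence sums of the multiset
consisting of each element of `A` with multiplicity `r`, coming from
submultisets with at least `α` terms. -/
def sigmaSeqAtLeast (A : Finset ℤ) (r α : ℕ) : Finset ℤ :=
  (((r • A.val).powerset.filter (fun B => α ≤ Multiset.card B)).map
    Multiset.sum).toFinset

namespace SigmaProof

def Tri (n : ℕ) : ℕ := n * (n + 1) / 2

lemma two_mul_Tri (n : ℕ) : 2 * Tri n = n * (n + 1) :=
  Nat.mul_div_cancel' ((Nat.even_mul_succ_self n).two_dvd)

lemma Tri_succ (n : ℕ) : Tri (n + 1) = Tri n + (n + 1) := by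
  have h1 := two_mul_Tri n
  have h2 := two_mul_Tri (n + 1)
  have h3 : (n + 1) * (n + 1 + 1) = n * (n + 1) + 2 * (n + 1) := by ring
  omega

lemma Tri_cast (n : ℕ) : ((Tri n : ℤ)) = (n : ℤ) * ((n : ℤ) + 1) / 2 := by
  have h : (2 : ℤ) * (Tri n : ℤ) = (n : ℤ) * ((n : ℤ) + 1) := by
    exact_mod_cast congrArg (fun x : ℕ => (x : ℤ)) (two_mul_Tri n)
  rw [← h, Int.mul_ediv_cancel_left _ (by norm_num)]

lemma mem_sigma {A : Finset ℤ} {r α : ℕ} {x : ℤ} :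
    x ∈ sigmaSeqAtLeast A r α ↔
      ∃ B : Multiset ℤ, B ≤ r • A.val ∧ α ≤ Multiset.card B ∧ B.sum = x := by
  unfold sigmaSeqAtLeast
  simp only [Multiset.mem_toFinset, Multiset.mem_map, Multiset.mem_filter,
    Multiset.mem_powerset]
  constructor
  · rintro ⟨B, ⟨h1, h2⟩, h3⟩; exact ⟨B, h1, h2, h3⟩
  · rintro ⟨B, h1, h2, h3⟩; exact ⟨B, ⟨h1, h2⟩, h3⟩

lemma ne_neg_of {A : Finset ℤ} (hA : A ∩ A.image (fun x => -x) = ∅) :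
    ∀ x ∈ A, ∀ y ∈ A, x ≠ -y := by
  intro x hx y hy hxy
  have : x ∈ A ∩ A.image (fun x => -x) :=
    Finset.mem_inter.mpr ⟨hx, Finset.mem_image.mpr ⟨y, hy, hxy.symm⟩⟩
  simp [hA] at this

lemma zero_not_mem {A : Finset ℤ} (hne : ∀ x ∈ A, ∀ y ∈ A, x ≠ -y) : (0:ℤ) ∉ A :=
  fun h => hne 0 h 0 h (by norm_num)

lemma sigma_nonempty {A : Finset ℤ} {r α : ℕ} (h : α ≤ r * A.card) :
    (sigmaSeqAtLeast A r α).Nonempty := by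
  refine ⟨(r • A.val).sum, mem_sigma.mpr ⟨r • A.val, le_refl _, ?_, rfl⟩⟩
  rw [Multiset.card_nsmul]
  exact h

lemma sigma_mono {A' A : Finset ℤ} {r α : ℕ} (h : A' ⊆ A) :
    sigmaSeqAtLeast A' r α ⊆ sigmaSeqAtLeast A r α := by
  intro x hx
  obtain ⟨B, h1, h2, h3⟩ := mem_sigma.mp hx
  refine mem_sigma.mpr ⟨B, le_trans h1 ?_, h2, h3⟩
  rw [Multiset.le_iff_count]
  intro a
  simp only [Multiset.count_nsmul]
  exact Nat.mul_le_mul_left _ (Multiset.le_iff_count.mp (Finset.val_le_iff.mpr h) a)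

lemma add_mem_sigma {A : Finset ℤ} {r₁ r₂ α₁ α₂ : ℕ} {x y : ℤ}
    (hx : x ∈ sigmaSeqAtLeast A r₁ α₁) (hy : y ∈ sigmaSeqAtLeast A r₂ α₂) :
    x + y ∈ sigmaSeqAtLeast A (r₁ + r₂) (α₁ + α₂) := by
  obtain ⟨B₁, hb1, hc1, hs1⟩ := mem_sigma.mp hx
  obtain ⟨B₂, hb2, hc2, hs2⟩ := mem_sigma.mp hy
  refine mem_sigma.mpr ⟨B₁ + B₂, ?_, ?_, ?_⟩
  · rw [add_nsmul]; exact add_le_add hb1 hb2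
  · rw [Multiset.card_add]; omega
  · rw [Multiset.sum_add, hs1, hs2]

lemma card_sumset {X Y Z : Finset ℤ} (hX : X.Nonempty) (hY : Y.Nonempty)
    (h : ∀ x ∈ X, ∀ y ∈ Y, x + y ∈ Z) : X.card + Y.card ≤ Z.card + 1 := by
  classical
  set U := X.image (fun x => x + Y.min' hY) with hU
  set V := Y.image (fun y => X.max' hX + y) with hV
  have hUZ : U ⊆ Z := by
    intro z hz
    obtain ⟨x, hx, rfl⟩ := Finset.mem_image.mp hz
    exact h _ hx _ (Y.min'_mem hY)
  have hVZ : V ⊆ Z := by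
    intro z hz
    obtain ⟨y, hy, rfl⟩ := Finset.mem_image.mp hz
    exact h _ (X.max'_mem hX) _ hy
  have hUcard : U.card = X.card :=
    Finset.card_image_of_injective _ (fun a b hab => by omega)
  have hVcard : V.card = Y.card :=
    Finset.card_image_of_injective _ (fun a b hab => by omega)
  have hinter : (U ∩ V).card ≤ 1 := by
    rw [Finset.card_le_one]
    have key : ∀ a ∈ U ∩ V, a = X.max' hX + Y.min' hY := by
      intro a ha
      obtain ⟨haU, haV⟩ := Finset.mem_inter.mp ha
      obtain ⟨x, hx, hxe⟩ := Finset.mem_image.mp haU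
      obtain ⟨y, hy, hye⟩ := Finset.mem_image.mp haV
      have h1 : a ≤ X.max' hX + Y.min' hY := by
        rw [← hxe]; exact add_le_add_left (X.le_max' x hx) _
      have h2 : X.max' hX + Y.min' hY ≤ a := by
        rw [← hye]; exact add_le_add_right (Y.min'_le y hy) _
      omega
    intro a ha b hb
    rw [key a ha, key b hb]
  have hunion := Finset.card_union_add_card_inter U V
  have hle := Finset.card_le_card (Finset.union_subset hUZ hVZ)
  omega

lemma complement_case {A : Finset ℤ} {r α k : ℕ} (hcard : A.card = k)
    (hne : ∀ x ∈ A, ∀ y ∈ A, x ≠ -y) (hα : α + 1 = r * k) :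
    k + 1 ≤ (sigmaSeqAtLeast A r α).card := by
  classical
  have hr : 1 ≤ r := by
    rcases Nat.eq_zero_or_pos r with h | h
    · exfalso; rw [h, Nat.zero_mul] at hα; omega
    · exact h
  have hvalcard : Multiset.card A.val = k := hcard
  set S := (r • A.val).sum with hS
  have hfull : S ∈ sigmaSeqAtLeast A r α := by
    refine mem_sigma.mpr ⟨r • A.val, le_refl _, ?_, rfl⟩
    rw [Multiset.card_nsmul, hvalcard]; omega
  have hmem : ∀ x ∈ A, S - x ∈ sigmaSeqAtLeast A r α := by
    intro x hx
    have hxm : x ∈ r • A.val := by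
      rw [Multiset.mem_nsmul]
      exact ⟨by omega, hx⟩
    refine mem_sigma.mpr ⟨(r • A.val).erase x, Multiset.erase_le _ _, ?_, ?_⟩
    · rw [Multiset.card_erase_of_mem hxm, Multiset.card_nsmul, hvalcard,
        Nat.pred_eq_sub_one]
      omega
    · have hc := Multiset.cons_erase hxm
      have hsum : S = x + ((r • A.val).erase x).sum := by
        rw [hS, ← Multiset.sum_cons, hc]
      omega
  set NEW := insert S (A.image (fun x => S - x)) with hNEW
  have hsub : NEW ⊆ sigmaSeqAtLeast A r α := by
    intro z hz
    rcases Finset.mem_insert.mp hz with rfl | hz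
    · exact hfull
    · obtain ⟨x, hx, rfl⟩ := Finset.mem_image.mp hz
      exact hmem x hx
  have hS_not : S ∉ A.image (fun x => S - x) := by
    intro hmem'
    obtain ⟨x, hx, hxe⟩ := Finset.mem_image.mp hmem'
    have hx0 : x = 0 := by omega
    exact zero_not_mem hne (hx0 ▸ hx)
  have hcardNEW : NEW.card = k + 1 := by
    rw [hNEW, Finset.card_insert_of_notMem hS_not,
      Finset.card_image_of_injective _ (fun a b hab => by omega), hcard]
  calc k + 1 = NEW.card := hcardNEW.symm
    _ ≤ _ := Finset.card_le_card hsub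

lemma step_pos {A : Finset ℤ} {α : ℕ} {a : ℤ}
    (hne : ∀ x ∈ A, ∀ y ∈ A, x ≠ -y) (haA : a ∈ A) (hapos : 0 < a)
    (habs : ∀ x ∈ A.erase a, |x| < a) (hα : α + 1 ≤ A.card) :
    (sigmaSeqAtLeast (A.erase a) 1 α).card + A.card ≤ (sigmaSeqAtLeast A 1 α).card := by
  classical
  set A' := A.erase a with hA'
  have hcard' : A'.card = A.card - 1 := Finset.card_erase_of_mem haA
  have hAcardpos : 1 ≤ A.card := by omega
  have hne' : (sigmaSeqAtLeast A' 1 α).Nonempty := by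
    apply sigma_nonempty
    rw [one_mul]; omega
  set M := (sigmaSeqAtLeast A' 1 α).max' hne' with hM
  obtain ⟨B, hBle, hBcard, hBsum⟩ := mem_sigma.mp ((sigmaSeqAtLeast A' 1 α).max'_mem hne')
  rw [one_nsmul] at hBle
  have haval : a ::ₘ A'.val = A.val := by
    rw [hA', Finset.erase_val]
    exact Multiset.cons_erase haA
  set f := fun x : ℤ => if x ∈ B then M + a - x else M + a + x with hf
  have hfmem : ∀ x ∈ A', f x ∈ sigmaSeqAtLeast A 1 α := by
    intro x hxA'
    have hxval : x ∈ A'.val := hxA'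
    by_cases hxB : x ∈ B
    · refine mem_sigma.mpr ⟨a ::ₘ B.erase x, ?_, ?_, ?_⟩
      · rw [one_nsmul, ← haval]
        exact Multiset.cons_le_cons a (le_trans (Multiset.erase_le x B) hBle)
      · have hBpos : 1 ≤ Multiset.card B := by
          by_contra hcon
          have : B = 0 := by
            rw [← Multiset.card_eq_zero]; omega
          rw [this] at hxB
          simp at hxB
        rw [Multiset.card_cons, Multiset.card_erase_of_mem hxB, Nat.pred_eq_sub_one]
        omega
      · have hcx := Multiset.cons_erase hxB
        have hse : B.sum = x + (B.erase x).sum := by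
          rw [← Multiset.sum_cons, hcx]
        rw [Multiset.sum_cons]
        simp only [hf]
        rw [if_pos hxB]
        omega
    · refine mem_sigma.mpr ⟨a ::ₘ x ::ₘ B, ?_, ?_, ?_⟩
      · rw [one_nsmul, ← haval]
        refine Multiset.cons_le_cons a ?_
        rw [Multiset.le_iff_count]
        intro y
        by_cases hyx : y = x
        · subst hyx
          have h0 : Multiset.count y B = 0 := Multiset.count_eq_zero.mpr hxB
          have h1 : 1 ≤ Multiset.count y A'.val := Multiset.count_pos.mpr hxval
          rw [Multiset.count_cons_self]
          omega
        · rw [Multiset.count_cons_of_ne hyx]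
          exact Multiset.le_iff_count.mp hBle y
      · rw [Multiset.card_cons, Multiset.card_cons]; omega
      · rw [Multiset.sum_cons, Multiset.sum_cons]
        simp only [hf]
        rw [if_neg hxB]
        omega
  have hMa : M + a ∈ sigmaSeqAtLeast A 1 α := by
    refine mem_sigma.mpr ⟨a ::ₘ B, ?_, ?_, ?_⟩
    · rw [one_nsmul, ← haval]; exact Multiset.cons_le_cons a hBle
    · rw [Multiset.card_cons]; omega
    · rw [Multiset.sum_cons]; omega
  set NEW := insert (M + a) (A'.image f) with hNEWdef
  have hgt : ∀ z ∈ NEW, M < z := by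
    intro z hz
    rcases Finset.mem_insert.mp hz with rfl | hz
    · omega
    · obtain ⟨x, hx, rfl⟩ := Finset.mem_image.mp hz
      have habs' := habs x hx
      have h1 : x < a := lt_of_le_of_lt (le_abs_self x) habs'
      have h2 : -a < x := by
        have := neg_abs_le x
        omega
      simp only [hf]
      split <;> omega
  have hNEWsub : NEW ⊆ sigmaSeqAtLeast A 1 α := by
    intro z hz
    rcases Finset.mem_insert.mp hz with rfl | hz
    · exact hMa
    · obtain ⟨x, hx, rfl⟩ := Finset.mem_image.mp hz
      exact hfmem x hx
  have hinj : Set.InjOn f A' := by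
    intro x hx y hy hxy
    have hxA : x ∈ A := Finset.mem_of_mem_erase (Finset.mem_coe.mp hx)
    have hyA : y ∈ A := Finset.mem_of_mem_erase (Finset.mem_coe.mp hy)
    simp only [hf] at hxy
    by_cases h1 : x ∈ B
    · by_cases h2 : y ∈ B
      · rw [if_pos h1, if_pos h2] at hxy; omega
      · rw [if_pos h1, if_neg h2] at hxy
        exact absurd (show x = -y by omega) (hne x hxA y hyA)
    · by_cases h2 : y ∈ B
      · rw [if_neg h1, if_pos h2] at hxy
        exact absurd (show y = -x by omega) (hne y hyA x hxA)
      · rw [if_neg h1, if_neg h2] at hxy; omega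
  have hnotmem : M + a ∉ A'.image f := by
    intro h
    obtain ⟨x, hx, hxe⟩ := Finset.mem_image.mp h
    have hxA : x ∈ A := Finset.mem_of_mem_erase hx
    have hx0 : x ≠ 0 := fun h0 => zero_not_mem hne (h0 ▸ hxA)
    simp only [hf] at hxe
    split at hxe <;> omega
  have hcardNEW : NEW.card = A.card := by
    rw [hNEWdef, Finset.card_insert_of_notMem hnotmem, Finset.card_image_of_injOn hinj,
      hcard']
    omega
  have hdisj : Disjoint NEW (sigmaSeqAtLeast A' 1 α) := by
    rw [Finset.disjoint_left]
    intro z hz hz'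
    have h1 := Finset.le_max' _ z hz'
    have h2 := hgt z hz
    omega
  have hsub2 : NEW ∪ sigmaSeqAtLeast A' 1 α ⊆ sigmaSeqAtLeast A 1 α :=
    Finset.union_subset hNEWsub (sigma_mono (Finset.erase_subset a A))
  have hu := Finset.card_union_of_disjoint hdisj
  have hl := Finset.card_le_card hsub2
  omega

lemma map_neg_nsmul (r : ℕ) (v : Multiset ℤ) :
    (r • v).map (fun x : ℤ => -x) = r • (v.map (fun x : ℤ => -x)) := by
  induction r with
  | zero => simp
  | succ n ih => rw [succ_nsmul, succ_nsmul, Multiset.map_add, ih]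

lemma sum_map_neg (B : Multiset ℤ) : (B.map (fun x : ℤ => -x)).sum = -B.sum := by
  induction B using Multiset.induction with
  | empty => simp
  | cons a s ih => simp [ih]; ring

lemma sigma_neg (A : Finset ℤ) (r α : ℕ) :
    sigmaSeqAtLeast (A.image (fun x => -x)) r α
      = (sigmaSeqAtLeast A r α).image (fun x => -x) := by
  classical
  have hinj : Function.Injective (fun x : ℤ => -x) := fun x y h => by
    simpa using h
  have hval : (A.image (fun x => -x)).val = A.val.map (fun x => -x) := by
    rw [Finset.image_val, Multiset.dedup_eq_self.mpr]
    exact A.nodup.map hinj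
  have hsm : r • (A.image (fun x => -x)).val = (r • A.val).map (fun x => -x) := by
    rw [hval, map_neg_nsmul]
  ext z
  rw [Finset.mem_image]
  constructor
  · intro hz
    obtain ⟨B, h1, h2, h3⟩ := mem_sigma.mp hz
    rw [hsm] at h1
    have hB' : B.map (fun x : ℤ => -x) ≤ r • A.val := by
      have hmm := Multiset.map_le_map (f := fun x : ℤ => -x) h1
      rwa [Multiset.map_map, show ((fun x : ℤ => -x) ∘ (fun x : ℤ => -x)) = id from
        funext (fun x => by simp), Multiset.map_id] at hmm
    refine ⟨(B.map (fun x : ℤ => -x)).sum, mem_sigma.mpr ⟨B.map (fun x : ℤ => -x), hB',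
      by rw [Multiset.card_map]; exact h2, rfl⟩, ?_⟩
    rw [sum_map_neg, h3]
    ring
  · rintro ⟨x, hx, rfl⟩
    obtain ⟨B, h1, h2, h3⟩ := mem_sigma.mp hx
    refine mem_sigma.mpr ⟨B.map (fun x : ℤ => -x), ?_, by rw [Multiset.card_map]; exact h2,
      by rw [sum_map_neg, h3]⟩
    rw [hsm]
    exact Multiset.map_le_map h1

lemma r1 : ∀ n : ℕ, ∀ (A : Finset ℤ) (α : ℕ), A.card = n →
    (∀ x ∈ A, ∀ y ∈ A, x ≠ -y) → α + 1 ≤ n →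
    (Tri n : ℤ) - Tri (α + 1) + α + 2 ≤ ((sigmaSeqAtLeast A 1 α).card : ℤ) := by
  intro n
  induction n using Nat.strong_induction_on with
  | _ n ih =>
    intro A α hcard hne hα
    by_cases hbase : α + 1 = n
    · have h := complement_case hcard hne (by omega : α + 1 = 1 * n)
      have heq : (Tri n : ℤ) - Tri (α + 1) + α + 2 = (n : ℤ) + 1 := by
        rw [hbase]
        omega
      rw [heq]
      exact_mod_cast h
    · have hstep : α + 2 ≤ n := by omega
      have hAne : A.Nonempty := by
        rw [← Finset.card_pos, hcard]; omega
      obtain ⟨a, haA, hamax⟩ := A.exists_max_image (fun x => |x|) hAne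
      have habs : ∀ x ∈ A.erase a, |x| < |a| := by
        intro x hx
        have hxA := Finset.mem_of_mem_erase hx
        have hle := hamax x hxA
        rcases lt_or_eq_of_le hle with h | h
        · exact h
        · exfalso
          rcases abs_eq_abs.mp h with h' | h'
          · exact (Finset.ne_of_mem_erase hx) h'
          · exact hne x hxA a haA h'
      have ha0 : a ≠ 0 := fun h => zero_not_mem hne (h ▸ haA)
      have hne'' : ∀ x ∈ A.erase a, ∀ y ∈ A.erase a, x ≠ -y := fun x hx y hy =>
        hne x (Finset.mem_of_mem_erase hx) y (Finset.mem_of_mem_erase hy)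
      have key : (sigmaSeqAtLeast (A.erase a) 1 α).card + n ≤ (sigmaSeqAtLeast A 1 α).card := by
        rcases lt_or_gt_of_ne ha0 with hneg | hpos
        · set A₂ := A.image (fun x => -x) with hA₂
          have hinj : Function.Injective (fun x : ℤ => -x) := fun x y h => by simpa using h
          have hcard₂ : A₂.card = n := by
            rw [hA₂, Finset.card_image_of_injective _ hinj, hcard]
          have hne₂ : ∀ x ∈ A₂, ∀ y ∈ A₂, x ≠ -y := by
            rintro x hx y hy hxy
            obtain ⟨x', hx', rfl⟩ := Finset.mem_image.mp hx
            obtain ⟨y', hy', rfl⟩ := Finset.mem_image.mp hy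
            refine hne x' hx' y' hy' ?_
            omega
          have hmem₂ : -a ∈ A₂ := Finset.mem_image.mpr ⟨a, haA, rfl⟩
          have e2 : A₂.erase (-a) = (A.erase a).image (fun x => -x) :=
            (Finset.image_erase hinj A a).symm
          have habs₂ : ∀ x ∈ A₂.erase (-a), |x| < -a := by
            intro x hx
            rw [e2] at hx
            obtain ⟨x', hx', rfl⟩ := Finset.mem_image.mp hx
            have h1 := habs x' hx'
            rw [abs_neg]
            rw [abs_of_neg hneg] at h1
            exact h1
          have hstep₂ := step_pos (α := α) hne₂ hmem₂ (by omega : (0:ℤ) < -a) habs₂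
            (by rw [hcard₂]; omega)
          have e1 : sigmaSeqAtLeast A₂ 1 α = (sigmaSeqAtLeast A 1 α).image (fun x => -x) :=
            sigma_neg A 1 α
          have e3 : sigmaSeqAtLeast (A₂.erase (-a)) 1 α
              = (sigmaSeqAtLeast (A.erase a) 1 α).image (fun x => -x) := by
            rw [e2]; exact sigma_neg (A.erase a) 1 α
          have hc1 : (Finset.image (fun x : ℤ => -x) (sigmaSeqAtLeast A 1 α)).card
              = (sigmaSeqAtLeast A 1 α).card := Finset.card_image_of_injective _ hinj
          have hc2 : (Finset.image (fun x : ℤ => -x) (sigmaSeqAtLeast (A.erase a) 1 α)).card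
              = (sigmaSeqAtLeast (A.erase a) 1 α).card := Finset.card_image_of_injective _ hinj
          rw [e1, e3] at hstep₂
          omega
        · have habs' : ∀ x ∈ A.erase a, |x| < a := by
            intro x hx
            have := habs x hx
            rwa [abs_of_pos hpos] at this
          have := step_pos (α := α) hne haA hpos habs' (by rw [hcard]; omega)
          rw [hcard] at this
          exact this
      have hcard'' : (A.erase a).card = n - 1 := by
        rw [Finset.card_erase_of_mem haA, hcard]
      have ihres := ih (n - 1) (by omega) (A.erase a) α hcard'' hne'' (by omega)
      have hT : (Tri n : ℤ) = (Tri (n - 1) : ℤ) + n := by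
        have h1 := Tri_succ (n - 1)
        rw [show n - 1 + 1 = n from by omega] at h1
        push_cast [h1]
        ring
      have keyz : ((sigmaSeqAtLeast (A.erase a) 1 α).card : ℤ) + n
          ≤ ((sigmaSeqAtLeast A 1 α).card : ℤ) := by exact_mod_cast key
      linarith

lemma main : ∀ r : ℕ, 1 ≤ r → ∀ (k m α : ℕ) (A : Finset ℤ), A.card = k →
    (∀ x ∈ A, ∀ y ∈ A, x ≠ -y) → 1 ≤ m → m ≤ k → α + 1 ≤ r * k →
    (m - 1) * r ≤ α → α < m * r →
    (r : ℤ) * ((Tri k : ℤ) - Tri m) + m * (m * r - α) + 1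
      ≤ ((sigmaSeqAtLeast A r α).card : ℤ) := by
  intro r hr
  induction r, hr using Nat.le_induction with
  | base =>
    intro k m α A hcard hne hm hmk hα hml hmu
    have h1 : m - 1 ≤ α := by simpa using hml
    have h2 : α < m := by simpa using hmu
    have hm' : m = α + 1 := by omega
    subst hm'
    have hres := r1 k A α hcard hne (by omega)
    have hq : ((α : ℤ) + 1) * (((α : ℤ) + 1) * 1 - α) = α + 1 := by ring
    push_cast
    push_cast at hres
    nlinarith [hres]
  | succ r hr ihr =>
    intro k m α A hcard hne hm hmk hα hml hmu
    by_cases htop : α + 1 = (r + 1) * k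
    · have hmk' : m = k := by
        have h1 : (r + 1) * k ≤ m * (r + 1) := by omega
        have h2 : (r + 1) * k ≤ (r + 1) * m := by
          rw [mul_comm m] at h1; exact h1
        have h3 : k ≤ m := Nat.le_of_mul_le_mul_left h2 (by omega)
        omega
      subst hmk'
      have hcomp := complement_case hcard hne htop
      have hαz : (α : ℤ) = ((r : ℤ) + 1) * m - 1 := by
        have : (α : ℤ) + 1 = ((r : ℤ) + 1) * m := by exact_mod_cast htop
        omega
      have heq : ((r : ℤ) + 1) * ((Tri m : ℤ) - Tri m) + m * (m * ((r : ℤ) + 1) - α) + 1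
          = (m : ℤ) + 1 := by
        rw [hαz]; ring
      have hcompz : ((m : ℤ)) + 1 ≤ ((sigmaSeqAtLeast A (r + 1) α).card : ℤ) := by
        exact_mod_cast hcomp
      push_cast
      push_cast at heq
      linarith
    · have hexp1 : m * (r + 1) = m * r + m := by ring
      have hexp2 : (m - 1) * (r + 1) = (m - 1) * r + (m - 1) := by ring
      have hm1le : m - 1 ≤ (m - 1) * (r + 1) := Nat.le_mul_of_pos_right _ (by omega)
      have hmrk : m * r ≤ r * k := by
        rw [mul_comm m r]
        exact Nat.mul_le_mul_left r hmk
      by_cases hmid : α + 2 ≤ m * (r + 1)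
      · -- case (i) : β = α - (m-1), same m
        set β := α - (m - 1) with hβ
        have hβval : β + (m - 1) = α := by omega
        have hX := ihr k m β A hcard hne hm hmk (by omega) (by omega) (by omega)
        have hY := r1 k A (m - 1) hcard hne (by omega)
        have hadd : ∀ x ∈ sigmaSeqAtLeast A r β, ∀ y ∈ sigmaSeqAtLeast A 1 (m - 1),
            x + y ∈ sigmaSeqAtLeast A (r + 1) α := by
          intro x hx y hy
          have := add_mem_sigma hx hy
          rwa [hβval] at this
        have hXne : (sigmaSeqAtLeast A r β).Nonempty := by
          apply sigma_nonempty; rw [hcard]; omega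
        have hYne : (sigmaSeqAtLeast A 1 (m - 1)).Nonempty := by
          apply sigma_nonempty; rw [one_mul, hcard]; omega
        have hsum := card_sumset hXne hYne hadd
        have hsumz : ((sigmaSeqAtLeast A r β).card : ℤ) + ((sigmaSeqAtLeast A 1 (m-1)).card : ℤ)
            ≤ ((sigmaSeqAtLeast A (r+1) α).card : ℤ) + 1 := by exact_mod_cast hsum
        have hβz : (β : ℤ) = (α : ℤ) - (m : ℤ) + 1 := by omega
        have hmz : ((m - 1 : ℕ) : ℤ) = (m : ℤ) - 1 := by omega
        have hTm : ((Tri ((m - 1) + 1) : ℕ) : ℤ) = (Tri m : ℤ) := by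
          rw [show (m - 1) + 1 = m from by omega]
        have hYz : (Tri k : ℤ) - (Tri m : ℤ) + ((m : ℤ) - 1) + 2
            ≤ ((sigmaSeqAtLeast A 1 (m-1)).card : ℤ) := by
          have := hY
          rw [hTm, hmz] at this
          exact this
        have hiden : ((r : ℤ) + 1) * ((Tri k : ℤ) - Tri m) + m * (m * ((r : ℤ) + 1) - α) + 1
            = ((r : ℤ) * ((Tri k : ℤ) - Tri m) + m * (m * (r : ℤ) - β) + 1)
              + ((Tri k : ℤ) - (Tri m : ℤ) + ((m : ℤ) - 1) + 2) - 1 := by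
          rw [hβz]; ring
        push_cast
        push_cast at hiden hX hYz hsumz
        linarith
      · -- case (ii) : α = m(r+1) - 1, use m+1 at level r
        have hα1 : α + 1 = m * (r + 1) := by omega
        have hmklt : m < k := by
          rcases Nat.lt_or_ge m k with h | h
          · exact h
          · exfalso
            have : m = k := le_antisymm hmk h
            subst this
            rw [mul_comm] at hα1
            exact htop hα1
        set β := m * r with hβ
        have hexp3 : (m + 1) * r = m * r + r := by ring
        have hexp4 : k * r = r * k := by ring
        have hmrk2 : (m + 1) * r ≤ k * r := Nat.mul_le_mul_right r (by omega)
        have hX := ihr k (m + 1) β A hcard hne (by omega) (by omega) (by omega)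
          (by simp [hβ]) (by omega)
        have hY := r1 k A (m - 1) hcard hne (by omega)
        have hadd : ∀ x ∈ sigmaSeqAtLeast A r β, ∀ y ∈ sigmaSeqAtLeast A 1 (m - 1),
            x + y ∈ sigmaSeqAtLeast A (r + 1) α := by
          intro x hx y hy
          have := add_mem_sigma hx hy
          rwa [show β + (m - 1) = α from by omega] at this
        have hXne : (sigmaSeqAtLeast A r β).Nonempty := by
          apply sigma_nonempty; rw [hcard]; omega
        have hYne : (sigmaSeqAtLeast A 1 (m - 1)).Nonempty := by
          apply sigma_nonempty; rw [one_mul, hcard]; omega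
        have hsum := card_sumset hXne hYne hadd
        have hsumz : ((sigmaSeqAtLeast A r β).card : ℤ) + ((sigmaSeqAtLeast A 1 (m-1)).card : ℤ)
            ≤ ((sigmaSeqAtLeast A (r+1) α).card : ℤ) + 1 := by exact_mod_cast hsum
        have hmz : ((m - 1 : ℕ) : ℤ) = (m : ℤ) - 1 := by omega
        have hTm : ((Tri ((m - 1) + 1) : ℕ) : ℤ) = (Tri m : ℤ) := by
          rw [show (m - 1) + 1 = m from by omega]
        have hYz : (Tri k : ℤ) - (Tri m : ℤ) + ((m : ℤ) - 1) + 2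
            ≤ ((sigmaSeqAtLeast A 1 (m-1)).card : ℤ) := by
          have := hY
          rw [hTm, hmz] at this
          exact this
        have hTsucc : ((Tri (m + 1) : ℕ) : ℤ) = (Tri m : ℤ) + (m : ℤ) + 1 := by
          have := Tri_succ m
          push_cast [this]
          ring
        have hβz : (β : ℤ) = (m : ℤ) * r := by
          rw [hβ]; push_cast; ring
        have hαz : (α : ℤ) = (m : ℤ) * ((r : ℤ) + 1) - 1 := by
          have : (α : ℤ) + 1 = (m : ℤ) * ((r : ℤ) + 1) := by exact_mod_cast hα1
          omega
        have hiden : ((r : ℤ) + 1) * ((Tri k : ℤ) - Tri m) + m * (m * ((r : ℤ) + 1) - α) + 1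
            = ((r : ℤ) * ((Tri k : ℤ) - (Tri (m+1) : ℤ))
                + ((m : ℤ) + 1) * (((m : ℤ) + 1) * r - β) + 1)
              + ((Tri k : ℤ) - (Tri m : ℤ) + ((m : ℤ) - 1) + 2) - 1 := by
          rw [hβz, hαz, hTsucc]; ring
        push_cast
        push_cast at hiden hX hYz hsumz
        linarith

end SigmaProof

theorem stmt_13 (k r α m : ℕ) (hk : 2 ≤ k) (hr : 1 ≤ r)
    (hα : α ≤ r * k - 1) (hm1 : 1 ≤ m) (hmk : m ≤ k)
    (hml : (m - 1) * r ≤ α) (hmu : α < m * r)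
    (A : Finset ℤ) (hcard : A.card = k)
    (hA : A ∩ A.image (fun x => -x) = ∅) :
    ((sigmaSeqAtLeast A r α).card : ℤ) ≥
      (r : ℤ) * ((k : ℤ) * ((k : ℤ) + 1) / 2 - (m : ℤ) * ((m : ℤ) + 1) / 2)
        + (m : ℤ) * ((m : ℤ) * (r : ℤ) - (α : ℤ)) + 1 := by
  have hne := SigmaProof.ne_neg_of hA
  have hrk : 2 ≤ r * k := by
    calc 2 = 1 * 2 := by ring
    _ ≤ r * k := Nat.mul_le_mul hr hk
  have hα' : α + 1 ≤ r * k := by omega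
  have hres := SigmaProof.main r hr k m α A hcard hne hm1 hmk hα' hml hmu
  rw [ge_iff_le]
  rw [← SigmaProof.Tri_cast k, ← SigmaProof.Tri_cast m]
  exact hres
end

section
/- Let k ≥ 2, r ≥ 1, and α be integers with 0 ≤ α ≤ rk − 1, and let m ∈ [1, k] be the integer with (m−1)r ≤ α < mr. Let A be a set of k distinct integers with A ∩ (−A) = {0}, and let 𝒜 be the multiset consisting of each element of A with multiplicity exactly r. Then |Σ_α(𝒜)| ≥ r(k(k−1)/2 − m(m−1)/2) + (m−1)(mr − α) + 1. -/
lemma core_inj {M : ℤ} {e e' : ℕ} {t t' : ℤ} (ht0 : 0 < t) (htM : t ≤ M)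
    (ht0' : 0 < t') (htM' : t' ≤ M)
    (h : ((e:ℤ) - 1) * M + t = ((e':ℤ) - 1) * M + t') : e = e' ∧ t = t' := by
  have hM : 0 < M := lt_of_lt_of_le ht0 htM
  have key : ((e:ℤ) - e') * M = t' - t := by linear_combination h
  rcases lt_trichotomy e e' with hlt | heq | hgt
  · exfalso
    have h1 : (e:ℤ) + 1 ≤ e' := by exact_mod_cast hlt
    nlinarith [mul_nonneg (by linarith : (0:ℤ) ≤ (e':ℤ) - e - 1) hM.le]
  · subst heq; constructor; rfl; linarith [key]
  · exfalso
    have h1 : (e':ℤ) + 1 ≤ e := by exact_mod_cast hgt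
    nlinarith [mul_nonneg (by linarith : (0:ℤ) ≤ (e:ℤ) - e' - 1) hM.le]

lemma mem_sigma {A : Finset ℤ} {r α : ℕ} {B : Multiset ℤ}
    (hB : B ≤ r • A.val) (hc : α ≤ Multiset.card B) :
    B.sum ∈ sigmaSeqAtLeast A r α := by
  unfold sigmaSeqAtLeast
  rw [Multiset.mem_toFinset]
  rw [Multiset.mem_map]
  exact ⟨B, by rw [Multiset.mem_filter]; exact ⟨Multiset.mem_powerset.2 hB, hc⟩, rfl⟩

lemma mem_sigma_iff {A : Finset ℤ} {r α : ℕ} {s : ℤ} :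
    s ∈ sigmaSeqAtLeast A r α ↔ ∃ B ≤ r • A.val, α ≤ Multiset.card B ∧ B.sum = s := by
  unfold sigmaSeqAtLeast
  simp only [Multiset.mem_toFinset, Multiset.mem_map, Multiset.mem_filter,
    Multiset.mem_powerset]
  tauto

lemma sigma_mono {A A' : Finset ℤ} {r α : ℕ} (h : A' ⊆ A) :
    sigmaSeqAtLeast A' r α ⊆ sigmaSeqAtLeast A r α := by
  intro s hs
  rcases mem_sigma_iff.1 hs with ⟨B, hB, hc, hsum⟩
  exact hsum ▸ mem_sigma (hB.trans (nsmul_le_nsmul_right (Finset.val_le_iff.2 h) r)) hc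

lemma sigma_nonempty {A : Finset ℤ} {r α : ℕ} (h : α ≤ r * A.card) :
    (sigmaSeqAtLeast A r α).Nonempty := by
  have hcard : Multiset.card (r • A.val) = r * A.card := by
    rw [Multiset.card_nsmul]; rfl
  have hne : (Multiset.powersetCard α (r • A.val)) ≠ 0 := by
    intro h0
    have h2 := Multiset.card_powersetCard α (r • A.val)
    rw [h0, hcard] at h2
    have h3 := Nat.choose_pos h
    simp at h2
    omega
  have this := hne
  rcases Multiset.exists_mem_of_ne_zero this with ⟨B, hB⟩
  rw [Multiset.mem_powersetCard] at hB
  exact ⟨B.sum, mem_sigma hB.1 (le_of_eq hB.2.symm)⟩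

lemma neg_image_val (A : Finset ℤ) :
    (A.image (fun x => -x)).val = A.val.map (fun x => -x) := by
  have : (A.val.map (fun x : ℤ => -x)).Nodup := A.nodup.map neg_injective
  rw [Finset.image_val, Multiset.dedup_eq_self.2 this]

lemma nsmul_map_neg (r : ℕ) (s : Multiset ℤ) :
    r • (s.map (fun x => -x)) = (r • s).map (fun x => -x) := by
  induction r with
  | zero => simp
  | succ n ih => rw [succ_nsmul, succ_nsmul, Multiset.map_add, ih]

lemma sigma_neg (A : Finset ℤ) (r α : ℕ) :
    sigmaSeqAtLeast (A.image (fun x => -x)) r α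
      = (sigmaSeqAtLeast A r α).image (fun x => -x) := by
  ext s
  simp only [Finset.mem_image]
  constructor
  · intro hs
    rcases mem_sigma_iff.1 hs with ⟨B, hB, hc, hsum⟩
    rw [neg_image_val, nsmul_map_neg] at hB
    refine ⟨(B.map (fun x => -x)).sum, mem_sigma_iff.2 ⟨B.map (fun x => -x), ?_, by simpa using hc, rfl⟩, ?_⟩
    · have h2 := Multiset.map_le_map (f := fun x : ℤ => -x) hB
      rw [Multiset.map_map] at h2
      simpa using h2
    · rw [Multiset.sum_map_neg']
      simp [← hsum]
  · rintro ⟨a, ha, rfl⟩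
    rcases mem_sigma_iff.1 ha with ⟨B, hB, hc, hsum⟩
    refine mem_sigma_iff.2 ⟨B.map (fun x => -x), ?_, by simpa using hc, ?_⟩
    · rw [neg_image_val, nsmul_map_neg]
      exact Multiset.map_le_map hB
    · rw [Multiset.sum_map_neg']
      simp [hsum]




lemma count_smul_val {A : Finset ℤ} {r : ℕ} {a : ℤ} (ha : a ∈ A) :
    (r • A.val).count a = r := by
  rw [Multiset.count_nsmul, Multiset.count_eq_one_of_mem A.nodup ha, mul_one]

lemma count_smul_val_le {A : Finset ℤ} {r : ℕ} (a : ℤ) :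
    (r • A.val).count a ≤ r := by
  rw [Multiset.count_nsmul]
  by_cases h : a ∈ A
  · rw [Multiset.count_eq_one_of_mem A.nodup h, mul_one]
  · rw [Multiset.count_eq_zero_of_notMem h, mul_zero]; exact Nat.zero_le r

lemma exists_max_state (A : Finset ℤ) (r α : ℕ) (h0 : 0 ∈ A)
    (hne : (sigmaSeqAtLeast A r α).Nonempty) :
    ∃ B ≤ r • A.val, α ≤ Multiset.card B ∧
      B.sum = (sigmaSeqAtLeast A r α).max' hne ∧
      B.count 0 = r ∧ ∀ a ∈ A, 0 < a → B.count a = r := by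
  set M := (sigmaSeqAtLeast A r α).max' hne with hM
  have hMmem : M ∈ sigmaSeqAtLeast A r α := Finset.max'_mem _ _
  rcases mem_sigma_iff.1 hMmem with ⟨B, hB, hc, hsum⟩
  set B₁ := B.filter (· ≠ 0) + Multiset.replicate r 0 with hB₁
  have hcount0 : B.count 0 ≤ r := le_trans (Multiset.count_le_of_le 0 hB) (count_smul_val_le 0)
  have hsum_filter : (B.filter (· ≠ 0)).sum = B.sum := by
    conv_rhs => rw [← Multiset.filter_add_not (· ≠ 0) B]
    rw [Multiset.sum_add]
    have : (B.filter (fun a => ¬(a ≠ 0))).sum = 0 := by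
      apply Multiset.sum_eq_zero
      intro x hx
      have := Multiset.of_mem_filter hx
      simpa using this
    rw [this, add_zero]
  have hsumB₁ : B₁.sum = M := by
    rw [hB₁, Multiset.sum_add, hsum_filter, Multiset.sum_replicate, hsum]
    simp
  have hcard_filter : Multiset.card B ≤ Multiset.card (B.filter (· ≠ 0)) + B.count 0 := by
    conv_lhs => rw [← Multiset.filter_add_not (· ≠ 0) B]
    rw [Multiset.card_add]
    have heq : Multiset.card (B.filter (fun a => ¬(a ≠ 0))) = B.count 0 := by
      rw [← Multiset.countP_eq_card_filter, Multiset.count]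
      apply Multiset.countP_congr rfl
      intro x _
      simp [eq_comm]
    omega
  have hcardB₁ : α ≤ Multiset.card B₁ := by
    rw [hB₁, Multiset.card_add, Multiset.card_replicate]
    omega
  have hleB₁ : B₁ ≤ r • A.val := by
    rw [Multiset.le_iff_count]
    intro a
    rw [hB₁, Multiset.count_add, Multiset.count_replicate, Multiset.count_filter]
    by_cases ha : a = 0
    · subst ha
      rw [count_smul_val h0]
      simp
    · rw [if_pos ha, if_neg (Ne.symm ha), add_zero]
      exact Multiset.count_le_of_le a hB
  have hcnt0 : B₁.count 0 = r := by
    rw [hB₁, Multiset.count_add, Multiset.count_replicate, if_pos rfl,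
      Multiset.count_filter]
    simp
  refine ⟨B₁, hleB₁, hcardB₁, hsumB₁, hcnt0, ?_⟩
  intro a haA hapos
  by_contra hlt
  have hlt' : B₁.count a < r := lt_of_le_of_ne (le_trans (Multiset.count_le_of_le a hleB₁) (count_smul_val_le a)) hlt
  have hmem2 : (a ::ₘ B₁).sum ∈ sigmaSeqAtLeast A r α := by
    apply mem_sigma_iff.2
    refine ⟨a ::ₘ B₁, ?_, ?_, rfl⟩
    · rw [Multiset.le_iff_count]
      intro b
      rw [Multiset.count_cons]
      by_cases hb : b = a
      · subst hb
        rw [if_pos rfl, count_smul_val haA]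
        have := Multiset.count_le_of_le b hleB₁
        rw [count_smul_val haA] at this
        omega
      · rw [if_neg hb, add_zero]
        exact Multiset.count_le_of_le b hleB₁
    · rw [Multiset.card_cons]; omega
  have : (a ::ₘ B₁).sum ≤ M := Finset.le_max' _ _ hmem2
  rw [Multiset.sum_cons, hsumB₁] at this
  omega





lemma abs_inj_of_cond {A : Finset ℤ} (habs : A ∩ A.image (fun x => -x) = {0})
    {t t' : ℤ} (ht : t ∈ A) (ht' : t' ∈ A) (h : |t| = |t'|) : t = t' := by
  rcases abs_eq_abs.1 h with h1 | h1
  · exact h1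
  · have htmem : t ∈ A ∩ A.image (fun x => -x) := by
      refine Finset.mem_inter.2 ⟨ht, Finset.mem_image.2 ⟨t', ht', h1.symm⟩⟩
    rw [habs, Finset.mem_singleton] at htmem
    have ht'mem : t' ∈ A ∩ A.image (fun x => -x) := by
      refine Finset.mem_inter.2 ⟨ht', Finset.mem_image.2 ⟨t, ht, by omega⟩⟩
    rw [habs, Finset.mem_singleton] at ht'mem
    omega

lemma zero_mem_of_cond {A : Finset ℤ} (habs : A ∩ A.image (fun x => -x) = {0}) :
    0 ∈ A := by
  have : (0:ℤ) ∈ A ∩ A.image (fun x => -x) := by rw [habs]; exact Finset.mem_singleton_self 0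
  exact (Finset.mem_inter.1 this).1

lemma step_lemma (r α : ℕ) (hr : 1 ≤ r) (A : Finset ℤ) (astar : ℤ)
    (habs : A ∩ A.image (fun x => -x) = {0})
    (hstar : astar ∈ A) (hpos : 0 < astar)
    (hmax : ∀ t ∈ A, |t| ≤ astar)
    (hα : α + 1 ≤ r * (A.card - 1)) :
    (sigmaSeqAtLeast (A.erase astar) r α).card + r * (A.card - 1)
      ≤ (sigmaSeqAtLeast A r α).card := by
  classical
  set A' := A.erase astar with hA'
  have h0A : 0 ∈ A := zero_mem_of_cond habs
  have h0A' : 0 ∈ A' := Finset.mem_erase.2 ⟨by omega, h0A⟩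
  have hk1 : A'.card = A.card - 1 := Finset.card_erase_of_mem hstar
  have hcardA : 1 ≤ A.card := Finset.card_pos.2 ⟨0, h0A⟩
  have hsubA : A' ⊆ A := Finset.erase_subset _ _
  have habs' : ∀ t ∈ A', |t| < astar := by
    intro t ht
    rcases Finset.mem_erase.1 ht with ⟨htne, htA⟩
    rcases lt_or_eq_of_le (hmax t htA) with h | h
    · exact h
    · exfalso
      have : t = astar := abs_inj_of_cond habs htA hstar (by rw [h, abs_of_pos hpos])
      exact htne this
  have hne' : (sigmaSeqAtLeast A' r α).Nonempty := sigma_nonempty (by rw [hk1]; omega)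
  set M := (sigmaSeqAtLeast A' r α).max' hne' with hMdef
  obtain ⟨B₁, hB₁le, hB₁card, hB₁sum, hB₁cnt0, hB₁pos⟩ :=
    exists_max_state A' r α h0A' hne'
  -- decomposition of r • A.val
  have hAval : r • A.val = Multiset.replicate r astar + r • A'.val := by
    have h1 : astar ::ₘ A'.val = A.val := by
      rw [hA', Finset.erase_val]
      exact Multiset.cons_erase (by exact hstar)
    rw [← h1, ← Multiset.singleton_add, smul_add, Multiset.nsmul_singleton]
  have hcntB₁le : ∀ a, B₁.count a ≤ r := fun a =>
    le_trans (Multiset.count_le_of_le a hB₁le) (count_smul_val_le a)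
  -- sets
  set F := A'.filter (fun t => t < 0 ∧ B₁.count t = r) with hF
  set Dmov := A'.filter (fun t => t ≠ 0 ∧ ¬(t < 0 ∧ B₁.count t = r)) with hD
  have hsplit : Dmov.card + F.card = A.card - 2 := by
    have hE : (A'.filter (fun t => t ≠ 0)).card = A.card - 2 := by
      rw [Finset.filter_ne', Finset.card_erase_of_mem h0A', hk1]
      omega
    have hFeq : F = (A'.filter (fun t => t ≠ 0)).filter
        (fun t => t < 0 ∧ B₁.count t = r) := by
      ext x
      simp only [hF, Finset.mem_filter, ne_eq]
      constructor
      · rintro ⟨h1, h2, h3⟩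
        exact ⟨⟨h1, by omega⟩, h2, h3⟩
      · rintro ⟨⟨h1, _⟩, h2, h3⟩
        exact ⟨h1, h2, h3⟩
    have hDeq : Dmov = (A'.filter (fun t => t ≠ 0)).filter
        (fun t => ¬(t < 0 ∧ B₁.count t = r)) := by
      ext x
      simp only [hD, Finset.mem_filter, ne_eq]
      tauto
    have h2 := Finset.card_filter_add_card_filter_not
      (p := fun t => t < 0 ∧ B₁.count t = r) (s := A'.filter (fun t => t ≠ 0))
    rw [← hFeq, ← hDeq] at h2
    omega
  have hA2 : 2 ≤ A.card := Finset.one_lt_card.2 ⟨astar, hstar, 0, h0A, by omega⟩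
  rw [← hMdef] at hB₁sum
  -- the W₀ set
  set W₀ := insert (0:ℤ) (Dmov.image (fun t => -|t|)) with hW
  have hWmem : ∀ w ∈ W₀, -astar < w ∧ w ≤ 0 := by
    intro w hw
    rcases Finset.mem_insert.1 hw with rfl | hw
    · exact ⟨by omega, le_refl 0⟩
    · rcases Finset.mem_image.1 hw with ⟨t, ht, rfl⟩
      have h1 := habs' t (Finset.mem_filter.1 ht).1
      have h2 : 0 ≤ |t| := abs_nonneg t
      exact ⟨by omega, by omega⟩
  have hinj : Set.InjOn (fun t : ℤ => -|t|) Dmov := by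
    intro t ht t' ht' h
    simp only at h
    exact abs_inj_of_cond habs (hsubA (Finset.mem_filter.1 ht).1)
      (hsubA (Finset.mem_filter.1 ht').1) (by omega)
  have h0nm : (0:ℤ) ∉ Dmov.image (fun t => -|t|) := by
    intro h
    rcases Finset.mem_image.1 h with ⟨t, ht, h0⟩
    exact (Finset.mem_filter.1 ht).2.1 (abs_eq_zero.1 (by omega))
  have hWcard : W₀.card = Dmov.card + 1 := by
    rw [hW, Finset.card_insert_of_notMem h0nm, Finset.card_image_of_injOn hinj]
  -- BlockA
  set BlockA := (Finset.Icc 1 r ×ˢ W₀).image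
    (fun p : ℕ × ℤ => M + (p.1:ℤ) * astar + p.2) with hBl
  have hBlcard : BlockA.card = r * (Dmov.card + 1) := by
    rw [hBl, Finset.card_image_of_injOn, Finset.card_product, Nat.card_Icc, hWcard]
    · simp
    · intro p hp q hq h
      simp only [Finset.coe_product, Set.mem_prod, Finset.mem_coe, Finset.mem_Icc] at hp hq
      have h1 := hWmem p.2 hp.2
      have h2 := hWmem q.2 hq.2
      have key : ((p.1:ℤ) - 1) * astar + (p.2 + astar)
          = ((q.1:ℤ) - 1) * astar + (q.2 + astar) := by linear_combination h
      obtain ⟨e1, e2⟩ := core_inj (by omega) (by omega) (by omega) (by omega) key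
      exact Prod.ext e1 (by omega)
  have hBlgt : ∀ v ∈ BlockA, M < v ∧ v ≤ M + (r:ℤ) * astar := by
    intro v hv
    rcases Finset.mem_image.1 hv with ⟨p, hp, rfl⟩
    simp only [Finset.mem_product, Finset.mem_Icc] at hp
    have h1 := hWmem p.2 hp.2
    have hj1 : (1:ℤ) ≤ (p.1:ℤ) := by exact_mod_cast hp.1.1
    have hj2 : (p.1:ℤ) ≤ r := by exact_mod_cast hp.1.2
    constructor
    · nlinarith
    · nlinarith
  have hrepadd : ∀ j : ℕ, j ≤ r → ∀ C : Multiset ℤ, C ≤ r • A'.val →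
      C + Multiset.replicate j astar ≤ r • A.val := by
    intro j hj C hC
    have h1 : C + Multiset.replicate j astar
        ≤ r • A'.val + Multiset.replicate r astar :=
      add_le_add hC ((Multiset.replicate_le_replicate astar).2 hj)
    rw [hAval]
    exact le_trans h1 (le_of_eq (add_comm _ _))
  have hBlsub : BlockA ⊆ sigmaSeqAtLeast A r α := by
    intro v hv
    rcases Finset.mem_image.1 hv with ⟨p, hp, rfl⟩
    simp only [Finset.mem_product, Finset.mem_Icc] at hp
    obtain ⟨⟨hj1, hj2⟩, hw⟩ := hp
    rcases Finset.mem_insert.1 hw with hw0 | hwim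
    · -- w = 0
      have hle := hrepadd p.1 hj2 B₁ hB₁le
      have hcard : α ≤ Multiset.card (B₁ + Multiset.replicate p.1 astar) := by
        rw [Multiset.card_add, Multiset.card_replicate]; omega
      have hmem := mem_sigma hle hcard
      have hv : (B₁ + Multiset.replicate p.1 astar).sum = M + (p.1:ℤ) * astar + p.2 := by
        rw [Multiset.sum_add, Multiset.sum_replicate, hB₁sum, nsmul_eq_mul, hw0]
        ring
      rwa [hv] at hmem
    · rcases Finset.mem_image.1 hwim with ⟨t, htD, hteq⟩
      rw [← hteq]
      have htA' := (Finset.mem_filter.1 htD).1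
      have htprop := (Finset.mem_filter.1 htD).2
      rcases lt_trichotomy t 0 with htneg | h0 | htpos
      · -- t negative, not full
        have hcnt : B₁.count t < r := by
          have h1 := hcntB₁le t
          have h2 := htprop.2
          rcases Nat.lt_or_ge (B₁.count t) r with h | h
          · exact h
          · exact absurd ⟨htneg, by omega⟩ h2
        have hle1 : t ::ₘ B₁ ≤ r • A'.val := by
          rw [Multiset.le_iff_count]
          intro a
          by_cases ha : a = t
          · subst ha
            rw [Multiset.count_cons_self, count_smul_val htA']
            omega
          · rw [Multiset.count_cons_of_ne ha]
            exact Multiset.count_le_of_le a hB₁le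
        have hle := hrepadd p.1 hj2 _ hle1
        have hcard : α ≤ Multiset.card ((t ::ₘ B₁) + Multiset.replicate p.1 astar) := by
          rw [Multiset.card_add, Multiset.card_replicate, Multiset.card_cons]; omega
        have hmem := mem_sigma hle hcard
        have hv : ((t ::ₘ B₁) + Multiset.replicate p.1 astar).sum
            = M + (p.1:ℤ) * astar + (-|t|) := by
          rw [Multiset.sum_add, Multiset.sum_cons, Multiset.sum_replicate, hB₁sum,
            nsmul_eq_mul, abs_of_neg htneg]
          ring
        rwa [hv] at hmem
      · exact absurd h0 htprop.1
      · -- t positive: full, remove one copy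
        have htfull : B₁.count t = r := hB₁pos t htA' htpos
        have htmem : t ∈ B₁ := by
          rw [← Multiset.count_pos, htfull]; omega
        have hle := hrepadd p.1 hj2 _ ((Multiset.erase_le t B₁).trans hB₁le)
        have hcardpos : 0 < Multiset.card B₁ := Multiset.card_pos.2
          (by rintro rfl; simp at htmem)
        have hcard : α ≤ Multiset.card (B₁.erase t + Multiset.replicate p.1 astar) := by
          rw [Multiset.card_add, Multiset.card_replicate, Multiset.card_erase_of_mem htmem,
            Nat.pred_eq_sub_one]
          omega
        have hmem := mem_sigma hle hcard
        have hsume : (B₁.erase t).sum = M - t := by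
          have h1 := congrArg Multiset.sum (Multiset.cons_erase htmem)
          rw [Multiset.sum_cons, hB₁sum] at h1
          linarith
        have hv : (B₁.erase t + Multiset.replicate p.1 astar).sum
            = M + (p.1:ℤ) * astar + (-|t|) := by
          rw [Multiset.sum_add, Multiset.sum_replicate, hsume, nsmul_eq_mul,
            abs_of_pos htpos]
          ring
        rwa [hv] at hmem
  have hS'le : ∀ v ∈ sigmaSeqAtLeast A' r α, v ≤ M := fun v hv => Finset.le_max' _ v hv
  by_cases hFne : F.Nonempty
  · set tq := F.min' hFne with htqdef
    have htqF : tq ∈ F := F.min'_mem hFne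
    have htqprop := Finset.mem_filter.1 htqF
    have htqneg : tq < 0 := htqprop.2.1
    have htqcnt : B₁.count tq = r := htqprop.2.2
    set TopB := (Finset.Icc 1 r ×ˢ F).image
      (fun p : ℕ × ℤ => M + (r:ℤ) * astar + (((p.1:ℤ) - 1) * (-tq) + (-p.2))) with hTop
    have hFprop : ∀ t ∈ F, t < 0 ∧ B₁.count t = r ∧ tq ≤ t := by
      intro t ht
      have h1 := Finset.mem_filter.1 ht
      exact ⟨h1.2.1, h1.2.2, F.min'_le t ht⟩
    have hTopcard : TopB.card = r * F.card := by
      rw [hTop, Finset.card_image_of_injOn, Finset.card_product, Nat.card_Icc]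
      · simp
      · intro p hp q hq h
        simp only [Finset.coe_product, Set.mem_prod, Finset.mem_coe, Finset.mem_Icc] at hp hq
        obtain ⟨ht1, ht2, ht3⟩ := hFprop p.2 hp.2
        obtain ⟨hu1, hu2, hu3⟩ := hFprop q.2 hq.2
        have key : ((p.1:ℤ) - 1) * (-tq) + (-p.2) = ((q.1:ℤ) - 1) * (-tq) + (-q.2) := by
          linear_combination h
        obtain ⟨e1, e2⟩ := core_inj (by omega) (by omega) (by omega) (by omega) key
        exact Prod.ext e1 (by omega)
    have hTopgt : ∀ v ∈ TopB, M + (r:ℤ) * astar < v := by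
      intro v hv
      rcases Finset.mem_image.1 hv with ⟨p, hp, rfl⟩
      simp only [Finset.mem_product, Finset.mem_Icc] at hp
      obtain ⟨ht1, ht2, ht3⟩ := hFprop p.2 hp.2
      have hj1 : (1:ℤ) ≤ (p.1:ℤ) := by exact_mod_cast hp.1.1
      have h9 : (0:ℤ) ≤ ((p.1:ℤ) - 1) * (-tq) := mul_nonneg (by omega) (by omega)
      have h10 : 0 < -p.2 := by omega
      omega
    have hTopsub : TopB ⊆ sigmaSeqAtLeast A r α := by
      intro v hv
      rcases Finset.mem_image.1 hv with ⟨p, hp, rfl⟩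
      simp only [Finset.mem_product, Finset.mem_Icc] at hp
      obtain ⟨⟨hj1, hj2⟩, hpF⟩ := hp
      obtain ⟨ht1, ht2, ht3⟩ := hFprop p.2 hpF
      set rem : Multiset ℤ := p.2 ::ₘ Multiset.replicate (p.1 - 1) tq with hrem
      have hremle : rem ≤ B₁ := by
        rw [Multiset.le_iff_count]
        intro a
        rw [hrem, Multiset.count_cons, Multiset.count_replicate]
        have hc1 : Multiset.count a B₁ = r ∨ (a ≠ tq ∧ a ≠ p.2) := by
          rcases eq_or_ne a tq with h | h
          · left; rw [h]; exact htqcnt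
          · rcases eq_or_ne a p.2 with h' | h'
            · left; rw [h']; exact ht2
            · right; exact ⟨h, h'⟩
        rcases hc1 with h | ⟨h1, h2⟩
        · rw [h]; split_ifs <;> omega
        · rw [if_neg (fun hh => h1 hh.symm), if_neg h2]; simp
      have hremcard : Multiset.card rem = p.1 := by
        rw [hrem, Multiset.card_cons, Multiset.card_replicate]; omega
      have hcastp : ((p.1 - 1 : ℕ) : ℤ) = (p.1:ℤ) - 1 := by omega
      have hremsum : rem.sum = (p.2 : ℤ) + ((p.1:ℤ) - 1) * tq := by
        rw [hrem, Multiset.sum_cons, Multiset.sum_replicate, nsmul_eq_mul, hcastp]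
      have hsub1 : B₁ - rem ≤ r • A'.val := le_trans tsub_le_self hB₁le
      have hle := hrepadd r le_rfl _ hsub1
      have hcanc : (B₁ - rem) + rem = B₁ := tsub_add_cancel_of_le hremle
      have hsumsub : (B₁ - rem).sum = M - rem.sum := by
        have h1 := congrArg Multiset.sum hcanc
        rw [Multiset.sum_add, hB₁sum] at h1
        linarith
      have hp1le : p.1 ≤ Multiset.card B₁ := by
        rw [← hremcard]; exact Multiset.card_le_card hremle
      have hcardsub : Multiset.card (B₁ - rem) = Multiset.card B₁ - p.1 := by
        have h1 := congrArg Multiset.card hcanc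
        rw [Multiset.card_add, hremcard] at h1
        omega
      have hcard : α ≤ Multiset.card ((B₁ - rem) + Multiset.replicate r astar) := by
        rw [Multiset.card_add, Multiset.card_replicate, hcardsub]
        omega
      have hmem := mem_sigma hle hcard
      have hv : ((B₁ - rem) + Multiset.replicate r astar).sum
          = M + (r:ℤ) * astar + (((p.1:ℤ) - 1) * (-tq) + (-p.2)) := by
        rw [Multiset.sum_add, Multiset.sum_replicate, hsumsub, hremsum, nsmul_eq_mul]
        ring
      rwa [hv] at hmem
    have hd1 : Disjoint BlockA TopB := by
      rw [Finset.disjoint_left]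
      intro v hv hv2
      exact absurd (hTopgt v hv2) (not_lt.2 (hBlgt v hv).2)
    have hd2 : Disjoint (sigmaSeqAtLeast A' r α) (BlockA ∪ TopB) := by
      rw [Finset.disjoint_left]
      intro v hv hv2
      have hvM := hS'le v hv
      have h9 : (0:ℤ) ≤ (r:ℤ) * astar := mul_nonneg (by positivity) hpos.le
      rcases Finset.mem_union.1 hv2 with h | h
      · exact absurd (hBlgt v h).1 (not_lt.2 hvM)
      · have := hTopgt v h
        omega
    have hsubun : sigmaSeqAtLeast A' r α ∪ (BlockA ∪ TopB) ⊆ sigmaSeqAtLeast A r α :=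
      Finset.union_subset (sigma_mono hsubA) (Finset.union_subset hBlsub hTopsub)
    have hcards := Finset.card_le_card hsubun
    rw [Finset.card_union_of_disjoint hd2, Finset.card_union_of_disjoint hd1,
      hBlcard, hTopcard] at hcards
    have hmul : r * (Dmov.card + 1) + r * F.card = r * (A.card - 1) := by
      rw [← Nat.mul_add]
      congr 1
      omega
    omega
  · have hF0 : F.card = 0 := by
      rw [Finset.not_nonempty_iff_eq_empty.1 hFne]
      rfl
    have hd2 : Disjoint (sigmaSeqAtLeast A' r α) BlockA := by
      rw [Finset.disjoint_left]
      intro v hv hv2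
      exact absurd (hBlgt v hv2).1 (not_lt.2 (hS'le v hv))
    have hsubun : sigmaSeqAtLeast A' r α ∪ BlockA ⊆ sigmaSeqAtLeast A r α :=
      Finset.union_subset (sigma_mono hsubA) hBlsub
    have hcards := Finset.card_le_card hsubun
    rw [Finset.card_union_of_disjoint hd2, hBlcard] at hcards
    have hmul : r * (Dmov.card + 1) = r * (A.card - 1) := by
      congr 1
      omega
    omega

lemma pos_side (r α d : ℕ) (hd1 : 1 ≤ d) (hdr : d ≤ r)
    (A : Finset ℤ) (hαd : α + d = r * A.card) :
    ∃ PS : Finset ℤ, PS.card = d * (A.filter (fun t => 0 < t)).card ∧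
      PS ⊆ sigmaSeqAtLeast A r α ∧ ∀ v ∈ PS, v < (r • A.val).sum := by
  classical
  set P := A.filter (fun t => 0 < t) with hP
  set T := (r • A.val).sum with hT
  rcases P.eq_empty_or_nonempty with hPe | hPne
  · exact ⟨∅, by rw [hPe]; simp, by simp, by simp⟩
  set tp := P.max' hPne with htp
  have htpP : tp ∈ P := P.max'_mem hPne
  have htpA : tp ∈ A := (Finset.mem_filter.1 htpP).1
  have htppos : 0 < tp := (Finset.mem_filter.1 htpP).2
  have hPprop : ∀ t ∈ P, 0 < t ∧ t ≤ tp ∧ t ∈ A := by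
    intro t ht
    exact ⟨(Finset.mem_filter.1 ht).2, P.le_max' t ht, (Finset.mem_filter.1 ht).1⟩
  refine ⟨(Finset.Icc 1 d ×ˢ P).image
    (fun p : ℕ × ℤ => T - (((p.1:ℤ) - 1) * tp + p.2)), ?_, ?_, ?_⟩
  · rw [Finset.card_image_of_injOn, Finset.card_product, Nat.card_Icc]
    · simp
    · intro p hp q hq h
      simp only [Finset.coe_product, Set.mem_prod, Finset.mem_coe, Finset.mem_Icc] at hp hq
      obtain ⟨h1, h2, _⟩ := hPprop p.2 hp.2
      obtain ⟨h3, h4, _⟩ := hPprop q.2 hq.2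
      have key : ((p.1:ℤ) - 1) * tp + p.2 = ((q.1:ℤ) - 1) * tp + q.2 := by
        linear_combination -h
      obtain ⟨e1, e2⟩ := core_inj h1 h2 h3 h4 key
      exact Prod.ext e1 e2
  · intro v hv
    rcases Finset.mem_image.1 hv with ⟨p, hp, rfl⟩
    simp only [Finset.mem_product, Finset.mem_Icc] at hp
    obtain ⟨⟨he1, he2⟩, hpP⟩ := hp
    obtain ⟨h1, h2, h3⟩ := hPprop p.2 hpP
    set rem : Multiset ℤ := p.2 ::ₘ Multiset.replicate (p.1 - 1) tp with hrem
    have hremle : rem ≤ r • A.val := by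
      rw [Multiset.le_iff_count]
      intro a
      rw [hrem, Multiset.count_cons, Multiset.count_replicate]
      have hc1 : (r • A.val).count a = r ∨ (tp ≠ a ∧ a ≠ p.2) := by
        rcases eq_or_ne a tp with h | h
        · left; rw [h]; exact count_smul_val htpA
        · rcases eq_or_ne a p.2 with h' | h'
          · left; rw [h']; exact count_smul_val h3
          · right; exact ⟨fun hh => h hh.symm, h'⟩
      rcases hc1 with h | ⟨hn1, hn2⟩
      · rw [h]; split_ifs <;> omega
      · rw [if_neg hn1, if_neg hn2]; simp
    have hremcard : Multiset.card rem = p.1 := by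
      rw [hrem, Multiset.card_cons, Multiset.card_replicate]; omega
    have hcastp : ((p.1 - 1 : ℕ) : ℤ) = (p.1:ℤ) - 1 := by omega
    have hremsum : rem.sum = (p.2 : ℤ) + ((p.1:ℤ) - 1) * tp := by
      rw [hrem, Multiset.sum_cons, Multiset.sum_replicate, nsmul_eq_mul, hcastp]
    have hcanc : ((r • A.val) - rem) + rem = r • A.val := tsub_add_cancel_of_le hremle
    have hsumsub : ((r • A.val) - rem).sum = T - rem.sum := by
      have h5 := congrArg Multiset.sum hcanc
      rw [Multiset.sum_add] at h5
      rw [hT]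
      linarith
    have hcardA : Multiset.card (r • A.val) = r * A.card := by
      rw [Multiset.card_nsmul]; rfl
    have hcardsub : α ≤ Multiset.card ((r • A.val) - rem) := by
      have h5 := congrArg Multiset.card hcanc
      rw [Multiset.card_add, hremcard, hcardA] at h5
      omega
    have hmem := mem_sigma tsub_le_self hcardsub
    have hv : ((r • A.val) - rem).sum = T - (((p.1:ℤ) - 1) * tp + p.2) := by
      rw [hsumsub, hremsum]; ring
    rwa [hv] at hmem
  · intro v hv
    rcases Finset.mem_image.1 hv with ⟨p, hp, rfl⟩
    simp only [Finset.mem_product, Finset.mem_Icc] at hp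
    obtain ⟨⟨he1, he2⟩, hpP⟩ := hp
    obtain ⟨h1, h2, _⟩ := hPprop p.2 hpP
    have h9 : (0:ℤ) ≤ ((p.1:ℤ) - 1) * tp := mul_nonneg (by omega) (by omega)
    omega


lemma base_lemma (r α d : ℕ) (hd1 : 1 ≤ d) (hdr : d ≤ r)
    (A : Finset ℤ) (habs : A ∩ A.image (fun x => -x) = {0})
    (hαd : α + d = r * A.card) :
    (A.card - 1) * d + 1 ≤ (sigmaSeqAtLeast A r α).card := by
  classical
  have h0A : 0 ∈ A := zero_mem_of_cond habs
  set T := (r • A.val).sum with hT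
  have hcardA : Multiset.card (r • A.val) = r * A.card := by
    rw [Multiset.card_nsmul]; rfl
  have hTmem : T ∈ sigmaSeqAtLeast A r α := mem_sigma le_rfl (by omega)
  obtain ⟨PS, hPScard, hPSsub, hPSlt⟩ := pos_side r α d hd1 hdr A hαd
  set A2 := A.image (fun x => -x) with hA2
  have hA2card : A2.card = A.card := Finset.card_image_of_injective A neg_injective
  obtain ⟨PS2, hPS2card, hPS2sub, hPS2lt⟩ := pos_side r α d hd1 hdr A2
    (by rw [hA2card]; omega)
  have hT2 : (r • A2.val).sum = -T := by
    rw [hA2, neg_image_val, nsmul_map_neg, Multiset.sum_map_neg', hT]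
  set NegSide := PS2.image (fun x => -x) with hNS
  have hNScard : NegSide.card = PS2.card :=
    Finset.card_image_of_injective PS2 neg_injective
  have hNSsub : NegSide ⊆ sigmaSeqAtLeast A r α := by
    intro v hv
    rcases Finset.mem_image.1 hv with ⟨w, hw, rfl⟩
    have h1 := hPS2sub hw
    rw [sigma_neg] at h1
    rcases Finset.mem_image.1 h1 with ⟨u, hu, hueq⟩
    have : -w = u := by omega
    rwa [this]
  have hNSgt : ∀ v ∈ NegSide, T < v := by
    intro v hv
    rcases Finset.mem_image.1 hv with ⟨w, hw, rfl⟩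
    have := hPS2lt w hw
    rw [hT2] at this
    omega
  -- cardinality of the negative filter
  have hfilt : A2.filter (fun t => 0 < t) = (A.filter (fun t => t < 0)).image (fun x => -x) := by
    ext x
    simp only [hA2, Finset.mem_filter, Finset.mem_image]
    constructor
    · rintro ⟨⟨a, ha, rfl⟩, hx⟩
      exact ⟨a, ⟨ha, by omega⟩, rfl⟩
    · rintro ⟨a, ⟨ha, ha2⟩, rfl⟩
      exact ⟨⟨a, ha, rfl⟩, by omega⟩
  have hfiltcard : (A2.filter (fun t => 0 < t)).card = (A.filter (fun t => t < 0)).card := by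
    rw [hfilt, Finset.card_image_of_injective _ neg_injective]
  -- splitting of A
  have hsplit : (A.filter (fun t => 0 < t)).card + (A.filter (fun t => t < 0)).card
      = A.card - 1 := by
    have hE : (A.filter (fun t => t ≠ 0)).card = A.card - 1 := by
      rw [Finset.filter_ne', Finset.card_erase_of_mem h0A]
    have hFeq : A.filter (fun t => 0 < t) = (A.filter (fun t => t ≠ 0)).filter
        (fun t => 0 < t) := by
      ext x
      simp only [Finset.mem_filter, ne_eq]
      constructor
      · rintro ⟨h1, h2⟩
        exact ⟨⟨h1, by omega⟩, h2⟩
      · rintro ⟨⟨h1, _⟩, h2⟩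
        exact ⟨h1, h2⟩
    have hDeq : A.filter (fun t => t < 0) = (A.filter (fun t => t ≠ 0)).filter
        (fun t => ¬(0 < t)) := by
      ext x
      simp only [Finset.mem_filter, ne_eq]
      constructor
      · rintro ⟨h1, h2⟩
        exact ⟨⟨h1, by omega⟩, by omega⟩
      · rintro ⟨⟨h1, h2⟩, h3⟩
        exact ⟨h1, by omega⟩
    have h2 := Finset.card_filter_add_card_filter_not
      (p := fun t => 0 < t) (s := A.filter (fun t => t ≠ 0))
    rw [← hFeq, ← hDeq] at h2
    omega
  -- assemble
  have hd1' : Disjoint PS NegSide := by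
    rw [Finset.disjoint_left]
    intro v hv hv2
    exact absurd (hNSgt v hv2) (not_lt.2 (hPSlt v hv).le)
  have hTnot : T ∉ PS ∪ NegSide := by
    intro h
    rcases Finset.mem_union.1 h with h | h
    · exact absurd (hPSlt T h) (lt_irrefl T)
    · exact absurd (hNSgt T h) (lt_irrefl T)
  have hsubun : insert T (PS ∪ NegSide) ⊆ sigmaSeqAtLeast A r α := by
    intro v hv
    rcases Finset.mem_insert.1 hv with rfl | hv
    · exact hTmem
    · rcases Finset.mem_union.1 hv with h | h
      · exact hPSsub h
      · exact hNSsub h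
  have hcards := Finset.card_le_card hsubun
  rw [Finset.card_insert_of_notMem hTnot, Finset.card_union_of_disjoint hd1'] at hcards
  rw [hPScard, hNScard, hPS2card, hfiltcard] at hcards
  have hmul : d * (A.filter (fun t => 0 < t)).card + d * (A.filter (fun t => t < 0)).card
      = (A.card - 1) * d := by
    rw [← Nat.mul_add, hsplit, Nat.mul_comm]
  omega

lemma cond_erase {A : Finset ℤ} (habs : A ∩ A.image (fun x => -x) = {0})
    {a : ℤ} (ha : a ≠ 0) :
    (A.erase a) ∩ (A.erase a).image (fun x => -x) = {0} := by
  apply Finset.Subset.antisymm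
  · intro v hv
    rcases Finset.mem_inter.1 hv with ⟨h1, h2⟩
    rcases Finset.mem_image.1 h2 with ⟨u, hu, hueq⟩
    have h3 : v ∈ A ∩ A.image (fun x => -x) := Finset.mem_inter.2
      ⟨Finset.mem_of_mem_erase h1,
        Finset.mem_image.2 ⟨u, Finset.mem_of_mem_erase hu, hueq⟩⟩
    rwa [habs] at h3
  · rw [Finset.singleton_subset_iff]
    have h0A : 0 ∈ A := zero_mem_of_cond habs
    have h0e : (0:ℤ) ∈ A.erase a := Finset.mem_erase.2 ⟨fun h => ha h.symm, h0A⟩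
    exact Finset.mem_inter.2 ⟨h0e, Finset.mem_image.2 ⟨0, h0e, by norm_num⟩⟩

lemma image_neg_neg (A : Finset ℤ) :
    (A.image (fun x : ℤ => -x)).image (fun x : ℤ => -x) = A := by
  rw [Finset.image_image]
  have : ((fun x : ℤ => -x) ∘ (fun x : ℤ => -x)) = id := by
    funext x; simp
  rw [this, Finset.image_id]

lemma cond_neg {A : Finset ℤ} (habs : A ∩ A.image (fun x => -x) = {0}) :
    (A.image (fun x => -x)) ∩ (A.image (fun x => -x)).image (fun x => -x) = {0} := by
  rw [image_neg_neg, Finset.inter_comm, habs]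

lemma two_mul_tri (n : ℕ) : 2 * ((n+1) * n / 2) = (n+1) * n := by
  apply Nat.mul_div_cancel'
  rcases Nat.even_or_odd n with h | h
  · exact Dvd.dvd.mul_left h.two_dvd _
  · exact Dvd.dvd.mul_right (h.add_one).two_dvd _

lemma main_bound (r α m : ℕ) (hr : 1 ≤ r) (hm1 : 1 ≤ m)
    (hml : (m - 1) * r ≤ α) (hmu : α < m * r) :
    ∀ k : ℕ, m ≤ k → ∀ A : Finset ℤ, A.card = k →
      A ∩ A.image (fun x => -x) = {0} →
      r * (k * (k-1) / 2 - m * (m-1) / 2) + (m - 1) * (m * r - α) + 1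
        ≤ (sigmaSeqAtLeast A r α).card := by
  intro k hk
  induction k, hk using Nat.le_induction with
  | base =>
    intro A hcard habs
    have hsm : (m - 1) * r + r = m * r := by
      have h1 := Nat.sub_one_mul m r
      have h2 : r ≤ m * r := Nat.le_mul_of_pos_left r (by omega)
      omega
    have hb := base_lemma r α (m * r - α) (by omega) (by omega) A habs
      (by rw [hcard]; have h3 : r * m = m * r := Nat.mul_comm r m; omega)
    rw [hcard] at hb
    have h4 : m * (m-1) / 2 - m * (m-1) / 2 = 0 := by omega
    rw [h4, Nat.mul_zero]
    omega
  | succ k hmk ih =>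
    obtain ⟨j, rfl⟩ : ∃ j, k = j + 1 := ⟨k - 1, by omega⟩
    intro A hcard habs
    simp only [Nat.add_sub_cancel] at ih ⊢
    have h0A : 0 ∈ A := zero_mem_of_cond habs
    have hA2' : 2 ≤ A.card := by omega
    obtain ⟨w, hwA, hwmax⟩ := A.exists_max_image (fun t => |t|) ⟨0, h0A⟩
    have hwne : w ≠ 0 := by
      obtain ⟨t, htA, htne⟩ := Finset.exists_mem_ne (by omega : 1 < A.card) (0 : ℤ)
      have h1 := hwmax t htA
      intro h
      rw [h, abs_zero] at h1
      exact htne (abs_nonpos_iff.1 h1)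
    -- triangle number arithmetic
    have ea : 2 * ((j+1+1) * (j+1) / 2) = (j+1+1) * (j+1) := two_mul_tri (j+1)
    have eb : 2 * ((j+1) * j / 2) = (j+1) * j := two_mul_tri j
    have ec : 2 * (m * (m-1) / 2) = m * (m-1) := by
      obtain ⟨i, rfl⟩ : ∃ i, m = i + 1 := ⟨m - 1, by omega⟩
      simp only [Nat.add_sub_cancel]
      exact two_mul_tri i
    have eid : (j+1+1) * (j+1) = (j+1) * j + 2 * (j+1) := by ring
    have hcb : m * (m-1) / 2 ≤ (j+1) * j / 2 := by
      apply Nat.div_le_div_right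
      calc m * (m-1) ≤ (j+1) * (m-1) := Nat.mul_le_mul_right _ hmk
        _ ≤ (j+1) * j := Nat.mul_le_mul_left _ (by omega)
    have hsplit2 : (j+1+1) * (j+1) / 2 - m * (m-1) / 2
        = ((j+1) * j / 2 - m * (m-1) / 2) + (j+1) := by omega
    rw [hsplit2, Nat.mul_add]
    -- step lemma application
    have hcond' := cond_erase habs hwne
    have hcarde : (A.erase w).card = j + 1 := by
      rw [Finset.card_erase_of_mem hwA, hcard]
      omega
    have hih := ih (A.erase w) hcarde hcond'
    have hmr : m * r ≤ (j+1) * r := Nat.mul_le_mul_right r hmk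
    have hco : (j+1) * r = r * (j+1) := Nat.mul_comm _ _
    rcases lt_trichotomy w 0 with hneg | h0 | hpos
    · -- negative case : pass to -A
      set A2 := A.image (fun x : ℤ => -x) with hA2d
      have hcond2 := cond_neg habs
      have hw2 : -w ∈ A2 := Finset.mem_image.2 ⟨w, hwA, rfl⟩
      have hpos2 : 0 < -w := by omega
      have hmax2 : ∀ t ∈ A2, |t| ≤ -w := by
        intro t ht
        rcases Finset.mem_image.1 ht with ⟨u, hu, rfl⟩
        have h2 := hwmax u hu
        rw [abs_neg]
        rwa [abs_of_neg hneg] at h2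
      have hcard2 : A2.card = j + 1 + 1 := by
        rw [hA2d, Finset.card_image_of_injective A neg_injective, hcard]
      have hstep := step_lemma r α hr A2 (-w) hcond2 hw2 hpos2 hmax2
        (by rw [hcard2]; simp only [Nat.add_sub_cancel]; omega)
      have hsig2 : (sigmaSeqAtLeast A2 r α).card = (sigmaSeqAtLeast A r α).card := by
        rw [hA2d, sigma_neg]
        exact Finset.card_image_of_injective _ neg_injective
      have herase : A2.erase (-w) = (A.erase w).image (fun x : ℤ => -x) := by
        ext v
        simp only [hA2d, Finset.mem_erase, Finset.mem_image]
        constructor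
        · rintro ⟨hne, u, hu, rfl⟩
          exact ⟨u, ⟨fun h => hne (by rw [h]), hu⟩, rfl⟩
        · rintro ⟨u, ⟨hune, huA⟩, rfl⟩
          exact ⟨fun h => hune (neg_injective h), u, huA, rfl⟩
      have hsig3 : (sigmaSeqAtLeast (A2.erase (-w)) r α).card
          = (sigmaSeqAtLeast (A.erase w) r α).card := by
        rw [herase, sigma_neg]
        exact Finset.card_image_of_injective _ neg_injective
      rw [hcard2] at hstep
      simp only [Nat.add_sub_cancel] at hstep
      rw [hsig2, hsig3] at hstep
      omega
    · exact absurd h0 hwne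
    · -- positive case
      have hmaxw : ∀ t ∈ A, |t| ≤ w := by
        intro t ht
        have h2 := hwmax t ht
        rwa [abs_of_pos hpos] at h2
      have hstep := step_lemma r α hr A w habs hwA hpos hmaxw
        (by rw [hcard]; simp only [Nat.add_sub_cancel]; omega)
      rw [hcard] at hstep
      simp only [Nat.add_sub_cancel] at hstep
      omega

theorem stmt_14 (k r α m : ℕ) (hk : 2 ≤ k) (hr : 1 ≤ r)
    (hα : α ≤ r * k - 1) (hm1 : 1 ≤ m) (hmk : m ≤ k)
    (hml : (m - 1) * r ≤ α) (hmu : α < m * r)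
    (A : Finset ℤ) (hcard : A.card = k)
    (hA : A ∩ A.image (fun x => -x) = {0}) :
    ((sigmaSeqAtLeast A r α).card : ℤ) ≥
      (r : ℤ) * ((k : ℤ) * ((k : ℤ) - 1) / 2 - (m : ℤ) * ((m : ℤ) - 1) / 2)
        + ((m : ℤ) - 1) * ((m : ℤ) * (r : ℤ) - (α : ℤ)) + 1 := by
  have hNB := main_bound r α m hr hm1 hml hmu k hmk A hcard hA
  set tk := k * (k-1) / 2 with htk
  set tm := m * (m-1) / 2 with htm
  have e1 : 2 * tk = k * (k-1) := by
    have h := two_mul_tri (k-1)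
    rwa [Nat.sub_add_cancel (by omega : 1 ≤ k)] at h
  have e2 : 2 * tm = m * (m-1) := by
    have h := two_mul_tri (m-1)
    rwa [Nat.sub_add_cancel (by omega : 1 ≤ m)] at h
  have htmtk : tm ≤ tk := by
    apply Nat.div_le_div_right
    exact Nat.mul_le_mul hmk (by omega)
  have z1 : (k:ℤ) * ((k:ℤ) - 1) / 2 = (tk : ℤ) := by
    have h3 : ((k - 1 : ℕ) : ℤ) = (k:ℤ) - 1 := by omega
    have h1 : (k:ℤ) * ((k:ℤ) - 1) = 2 * (tk:ℤ) := by
      calc (k:ℤ) * ((k:ℤ) - 1) = (k:ℤ) * ((k-1:ℕ):ℤ) := by rw [h3]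
        _ = ((k * (k-1) : ℕ) : ℤ) := by push_cast; ring
        _ = ((2 * tk : ℕ) : ℤ) := by rw [e1]
        _ = 2 * (tk:ℤ) := by push_cast; ring
    rw [h1]
    exact Int.mul_ediv_cancel_left _ (by norm_num)
  have z2 : (m:ℤ) * ((m:ℤ) - 1) / 2 = (tm : ℤ) := by
    have h3 : ((m - 1 : ℕ) : ℤ) = (m:ℤ) - 1 := by omega
    have h1 : (m:ℤ) * ((m:ℤ) - 1) = 2 * (tm:ℤ) := by
      calc (m:ℤ) * ((m:ℤ) - 1) = (m:ℤ) * ((m-1:ℕ):ℤ) := by rw [h3]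
        _ = ((m * (m-1) : ℕ) : ℤ) := by push_cast; ring
        _ = ((2 * tm : ℕ) : ℤ) := by rw [e2]
        _ = 2 * (tm:ℤ) := by push_cast; ring
    rw [h1]
    exact Int.mul_ediv_cancel_left _ (by norm_num)
  rw [ge_iff_le, z1, z2]
  have z3 : ((m:ℤ) - 1) * ((m:ℤ) * (r:ℤ) - (α:ℤ)) = (((m-1) * (m*r - α) : ℕ) : ℤ) := by
    have h3 : ((m - 1 : ℕ) : ℤ) = (m:ℤ) - 1 := by omega
    have h4 : ((m * r - α : ℕ) : ℤ) = (m:ℤ) * (r:ℤ) - (α:ℤ) := by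
      rw [Nat.cast_sub (le_of_lt hmu)]
      push_cast
      ring
    rw [Nat.cast_mul, h3, h4]
  calc (r:ℤ) * ((tk:ℤ) - (tm:ℤ)) + ((m:ℤ) - 1) * ((m:ℤ) * (r:ℤ) - (α:ℤ)) + 1
      = ((r * (tk - tm) + (m-1) * (m*r - α) + 1 : ℕ) : ℤ) := by
        rw [z3]
        push_cast [Nat.cast_sub htmtk]
        ring
    _ ≤ ((sigmaSeqAtLeast A r α).card : ℤ) := by exact_mod_cast hNB
end

section
/- Let r ≥ 1 and let A be a set of k = n + p distinct integers consisting of exactly n ≥ 1 negative integers and exactly p ≥ 1 positive integers (0 ∉ A), and let 𝒜 be the multiset consisting of each element of A with multiplicity exactly r. Let α be an integer with 0 ≤ α ≤ rk − 1 and let m ∈ [1, k] be the integer with (m−1)r ≤ α < mr. If m ≤ n and m > p, then |Σ_α(𝒜)| ≥ r(n(n+1)/2 + p(p+1)/2 − (m−p)(m−p+1)/2) + (m−p)(mr − α) + 1. -/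
namespace SigmaChain
open List

/-- triangular numbers -/
def Tri : ℕ → ℕ
  | 0 => 0
  | n+1 => Tri n + (n+1)

lemma two_Tri (n : ℕ) : 2 * Tri n = n * (n+1) := by
  induction n with
  | zero => rfl
  | succ n ih => show 2 * (Tri n + (n+1)) = _; rw [mul_add, ih]; ring

/-- `G`, then `G` shifted by `T`, then by `2•T`, ..., `(k-1)•T`. -/
def shiftRep (G : List (Multiset ℤ)) (T : Multiset ℤ) : ℕ → List (Multiset ℤ)
  | 0 => []
  | k+1 => shiftRep G T k ++ G.map (· + k • T)

lemma length_shiftRep (G T) : ∀ k, (shiftRep G T k).length = k * G.length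
  | 0 => by simp [shiftRep]
  | k+1 => by
      simp [shiftRep, length_shiftRep G T k, Nat.succ_mul]

lemma mem_shiftRep {G T s} : ∀ {k}, s ∈ shiftRep G T k → ∃ c < k, ∃ g ∈ G, s = g + c • T
  | 0, h => by simp [shiftRep] at h
  | k+1, h => by
      rw [shiftRep, List.mem_append] at h
      rcases h with h | h
      · obtain ⟨c, hc, g, hg, rfl⟩ := mem_shiftRep h
        exact ⟨c, by omega, g, hg, rfl⟩
      · simp only [List.mem_map] at h
        obtain ⟨g, hg, rfl⟩ := h
        exact ⟨k, by omega, g, hg, rfl⟩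

lemma head?_shiftRep {G : List (Multiset ℤ)} (T) (hG : G ≠ []) :
    ∀ k, (shiftRep G T (k+1)).head? = G.head?
  | 0 => by
      cases G with
      | nil => exact absurd rfl hG
      | cons a t => simp [shiftRep, List.head?_map]
  | k+1 => by
      rw [shiftRep, List.head?_append, head?_shiftRep T hG k]
      cases G with
      | nil => exact absurd rfl hG
      | cons a t => simp

lemma getLast?_shiftRep {G : List (Multiset ℤ)} (T) (hG : G ≠ []) (k : ℕ) :
    (shiftRep G T (k+1)).getLast? = some (G.getLast hG + k • T) := by
  rw [shiftRep, List.getLast?_append, List.getLast?_map, List.getLast?_eq_getLast hG]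
  simp

lemma chain'_shiftRep {G : List (Multiset ℤ)} {T : Multiset ℤ} (hG : G ≠ [])
    (hch : IsChain (fun a b => a.sum < b.sum) G)
    (hj : (G.getLast hG).sum < (G.head hG).sum + T.sum) :
    ∀ k, IsChain (fun a b : Multiset ℤ => a.sum < b.sum) (shiftRep G T k)
  | 0 => by simp [shiftRep]
  | k+1 => by
      rw [shiftRep, List.isChain_append]
      refine ⟨chain'_shiftRep hG hch hj k, ?_, ?_⟩
      · rw [List.isChain_map]
        exact hch.imp (fun a b h => by
          simp only [Multiset.sum_add]; omega)
      · intro x hx y hy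
        cases k with
        | zero => simp [shiftRep] at hx
        | succ k' =>
            rw [getLast?_shiftRep T hG k'] at hx
            rw [List.head?_map, List.head?_eq_head hG] at hy
            simp only [Option.mem_def, Option.map_some, Option.some.injEq] at hx hy
            subst hx; subst hy
            simp only [Multiset.sum_add, Multiset.sum_nsmul, nsmul_eq_mul]
            have : (k' + 1 : ℕ) * T.sum = k' * T.sum + T.sum := by push_cast; ring
            push_cast
            push_cast at this
            linarith [hj, this]


def G0 (ws : List ℤ) : List (Multiset ℤ) := 0 :: ws.map (fun w => ({w} : Multiset ℤ))

def Pch (r : ℕ) : List ℤ → List (Multiset ℤ)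
  | [] => [0]
  | z :: l => shiftRep (G0 l.reverse) {z} r ++ (Pch r l).map (· + r • ({z} : Multiset ℤ))

def TL (β : ℕ) : List ℤ → List (Multiset ℤ)
  | [] => [0]
  | v :: l => 0 :: shiftRep (((v :: l).reverse).map (fun w => ({w} : Multiset ℤ))) {v} β

def NC (r β : ℕ) : ℕ → List ℤ → List (Multiset ℤ)
  | 0, l => TL β l
  | _+1, [] => [0]
  | f+1, z :: l => shiftRep (G0 l.reverse) {z} r ++ (NC r β f l).map (· + r • ({z} : Multiset ℤ))

lemma G0_ne_nil (ws : List ℤ) : G0 ws ≠ [] := List.cons_ne_nil _ _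

lemma mem_G0 {ws : List ℤ} {s : Multiset ℤ} (h : s ∈ G0 ws) :
    s = 0 ∨ ∃ w ∈ ws, s = ({w} : Multiset ℤ) := by
  rw [G0, List.mem_cons] at h
  rcases h with h | h
  · exact Or.inl h
  · right
    obtain ⟨a, ha, e⟩ := List.mem_map.1 h
    exact ⟨a, ha, e.symm⟩

lemma aux_le {z : ℤ} {l : List ℤ} {g : Multiset ℤ} {c r : ℕ}
    (hg : g = 0 ∨ ∃ w ∈ (z :: l), g = ({w} : Multiset ℤ)) (hc : c + 1 ≤ r) :
    g + c • ({z} : Multiset ℤ) ≤ r • ((z :: l : List ℤ) : Multiset ℤ) := by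
  have hz : ({z} : Multiset ℤ) ≤ ((z :: l : List ℤ) : Multiset ℤ) := by
    rw [Multiset.singleton_le]; exact List.mem_cons_self
  rcases hg with rfl | ⟨w, hw, rfl⟩
  · rw [zero_add]
    calc c • ({z} : Multiset ℤ) ≤ c • ((z :: l : List ℤ) : Multiset ℤ) :=
          nsmul_le_nsmul_right hz c
      _ ≤ r • ((z :: l : List ℤ) : Multiset ℤ) :=
          nsmul_le_nsmul_left (Multiset.zero_le _) (by omega)
  · have hw' : ({w} : Multiset ℤ) ≤ ((z :: l : List ℤ) : Multiset ℤ) := by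
      rw [Multiset.singleton_le]; exact hw
    calc ({w} : Multiset ℤ) + c • ({z} : Multiset ℤ)
        ≤ 1 • ((z :: l : List ℤ) : Multiset ℤ) + c • ((z :: l : List ℤ) : Multiset ℤ) := by
          refine add_le_add ?_ (nsmul_le_nsmul_right hz c)
          simpa using hw'
      _ = (1 + c) • ((z :: l : List ℤ) : Multiset ℤ) := (add_nsmul _ _ _).symm
      _ ≤ r • ((z :: l : List ℤ) : Multiset ℤ) :=
          nsmul_le_nsmul_left (Multiset.zero_le _) (by omega)

lemma smul_coe_cons (r : ℕ) (z : ℤ) (l : List ℤ) :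
    r • ((z :: l : List ℤ) : Multiset ℤ) = r • ({z} : Multiset ℤ) + r • ((l : List ℤ) : Multiset ℤ) := by
  rw [← smul_add, Multiset.singleton_add, Multiset.cons_coe]

lemma chain'_G0 {ws : List ℤ} (hws : ws.Pairwise (· < ·)) (hpos : ∀ w ∈ ws, 0 < w) :
    IsChain (fun a b : Multiset ℤ => a.sum < b.sum) (G0 ws) := by
  rw [G0, List.isChain_cons]
  constructor
  · intro y hy
    rw [List.head?_map] at hy
    cases ws with
    | nil => simp at hy
    | cons a t =>
        simp only [List.head?_cons, Option.map_some, Option.mem_def, Option.some.injEq] at hy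
        subst hy
        simpa using hpos a (List.mem_cons_self)
  · rw [List.isChain_map]
    exact (hws.imp (fun {a b} h => by simpa using h)).isChain

lemma getLast_G0_lt {ws : List ℤ} {z : ℤ} (hz : 0 < z) (hall : ∀ w ∈ ws, w < z) (h : G0 ws ≠ []) :
    ((G0 ws).getLast h).sum < z := by
  rcases mem_G0 (List.getLast_mem h) with e | ⟨w, hw, e⟩
  · rw [e]; simpa using hz
  · rw [e, Multiset.sum_singleton]; exact hall w hw

lemma head?_block {r : ℕ} {ws : List ℤ} {T : Multiset ℤ} {X : List (Multiset ℤ)} (hr : 1 ≤ r) :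
    (shiftRep (G0 ws) T r ++ X).head? = some 0 := by
  obtain ⟨rr, rfl⟩ : ∃ rr, r = rr + 1 := ⟨r - 1, by omega⟩
  rw [List.head?_append, head?_shiftRep T (G0_ne_nil ws) rr]
  rfl

lemma chain'_block {r : ℕ} {z : ℤ} {l : List ℤ} {rest : List (Multiset ℤ)} (hr : 1 ≤ r)
    (hsort : (z :: l).Pairwise (· > ·)) (hpos : ∀ x ∈ z :: l, 0 < x)
    (hrest : IsChain (fun a b : Multiset ℤ => a.sum < b.sum) rest)
    (hhead : rest.head? = some 0) :
    IsChain (fun a b : Multiset ℤ => a.sum < b.sum)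
      (shiftRep (G0 l.reverse) {z} r ++ rest.map (· + r • ({z} : Multiset ℤ))) := by
  have hz : 0 < z := hpos z (List.mem_cons_self)
  have hall : ∀ w ∈ l.reverse, w < z := fun w hw =>
    List.rel_of_pairwise_cons hsort (List.mem_reverse.1 hw)
  have hws : l.reverse.Pairwise (· < ·) := by
    rw [List.pairwise_reverse]
    exact hsort.of_cons
  have hposr : ∀ w ∈ l.reverse, 0 < w := fun w hw =>
    hpos w (List.mem_cons_of_mem _ (List.mem_reverse.1 hw))
  have hG := G0_ne_nil l.reverse
  have hlast := getLast_G0_lt hz hall hG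
  rw [List.isChain_append]
  refine ⟨chain'_shiftRep hG (chain'_G0 hws hposr) ?_ r, ?_, ?_⟩
  · show _ < ((G0 l.reverse).head hG).sum + ({z} : Multiset ℤ).sum
    have : (G0 l.reverse).head hG = 0 := rfl
    rw [this]
    simpa using hlast
  · rw [List.isChain_map]
    exact hrest.imp (fun {a b} h => by simp only [Multiset.sum_add]; omega)
  · intro x hx y hy
    obtain ⟨rr, rfl⟩ : ∃ rr, r = rr + 1 := ⟨r - 1, by omega⟩
    rw [getLast?_shiftRep _ hG rr] at hx
    rw [List.head?_map, hhead] at hy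
    simp only [Option.mem_def, Option.map_some, Option.some.injEq] at hx hy
    subst hx; subst hy
    simp only [Multiset.sum_add, Multiset.sum_nsmul, nsmul_eq_mul, Multiset.sum_singleton,
      Multiset.sum_zero, zero_add]
    push_cast
    linarith [hlast]

lemma head?_Pch {r : ℕ} (hr : 1 ≤ r) : ∀ l : List ℤ, (Pch r l).head? = some 0
  | [] => rfl
  | z :: l => by rw [Pch]; exact head?_block hr

lemma chain'_Pch {r : ℕ} (hr : 1 ≤ r) :
    ∀ {l : List ℤ}, l.Pairwise (· > ·) → (∀ x ∈ l, 0 < x) →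
      IsChain (fun a b : Multiset ℤ => a.sum < b.sum) (Pch r l)
  | [], _, _ => by simp [Pch]
  | z :: l, hsort, hpos => by
      rw [Pch]
      exact chain'_block hr hsort hpos
        (chain'_Pch hr hsort.of_cons (fun x hx => hpos x (List.mem_cons_of_mem _ hx)))
        (head?_Pch hr l)

lemma getLast?_Pch {r : ℕ} : ∀ l : List ℤ, (Pch r l).getLast? = some (r • (l : Multiset ℤ))
  | [] => by simp [Pch]
  | z :: l => by
      rw [Pch, List.getLast?_append, List.getLast?_map, getLast?_Pch l]
      simp [smul_coe_cons, add_comm]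

lemma length_Pch {r : ℕ} : ∀ l : List ℤ, (Pch r l).length = r * Tri l.length + 1
  | [] => by simp [Pch, Tri]
  | z :: l => by
      simp [Pch, length_shiftRep, G0, length_Pch l, Tri]
      ring

lemma mem_Pch_le {r : ℕ} (hr : 1 ≤ r) :
    ∀ {l : List ℤ} {s : Multiset ℤ}, s ∈ Pch r l → s ≤ r • (l : Multiset ℤ)
  | [], s, h => by
      simp only [Pch, List.mem_singleton] at h
      subst h
      exact Multiset.zero_le _
  | z :: l, s, h => by
      rw [Pch, List.mem_append] at h
      rcases h with h | h
      · obtain ⟨c, hc, g, hg, rfl⟩ := mem_shiftRep h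
        refine aux_le ?_ (by omega)
        rcases mem_G0 hg with e | ⟨w, hw, e⟩
        · exact Or.inl e
        · exact Or.inr ⟨w, List.mem_cons_of_mem _ (List.mem_reverse.1 hw), e⟩
      · obtain ⟨g, hg, rfl⟩ := List.mem_map.1 h
        rw [smul_coe_cons, add_comm (r • ({z} : Multiset ℤ))]
        exact add_le_add_left (mem_Pch_le hr hg) _

lemma chain'_TL {β : ℕ} (hβ : 1 ≤ β) {v : ℤ} {l : List ℤ}
    (hsort : (v :: l).Pairwise (· > ·)) (hpos : ∀ x ∈ v :: l, 0 < x) :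
    IsChain (fun a b : Multiset ℤ => a.sum < b.sum) (TL β (v :: l)) := by
  set G1 : List (Multiset ℤ) := ((v :: l).reverse).map (fun w => ({w} : Multiset ℤ)) with hG1def
  have hG1 : G1 ≠ [] := by simp [hG1def]
  have hmem : ∀ s ∈ G1, ∃ w ∈ v :: l, s = ({w} : Multiset ℤ) := by
    intro s hs
    obtain ⟨w, hw, e⟩ := List.mem_map.1 hs
    exact ⟨w, List.mem_reverse.1 hw, e.symm⟩
  have hchG1 : IsChain (fun a b : Multiset ℤ => a.sum < b.sum) G1 := by
    rw [hG1def, List.isChain_map]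
    have : (v :: l).reverse.Pairwise (· < ·) := by
      rw [List.pairwise_reverse]; exact hsort
    exact (this.imp (fun {a b} h => by simpa using h)).isChain
  rw [TL, List.isChain_cons]
  constructor
  · intro y hy
    obtain ⟨ββ, rfl⟩ : ∃ b, β = b + 1 := ⟨β - 1, by omega⟩
    rw [head?_shiftRep _ hG1 ββ] at hy
    have : y ∈ G1 := List.mem_of_mem_head? hy
    obtain ⟨w, hw, rfl⟩ := hmem y this
    simpa using hpos w hw
  · refine chain'_shiftRep hG1 hchG1 ?_ β
    obtain ⟨w, hw, e⟩ := hmem _ (List.getLast_mem hG1)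
    obtain ⟨w₀, hw₀, e₀⟩ := hmem _ (List.head_mem hG1)
    rw [e, e₀]
    simp only [Multiset.sum_singleton]
    have h1 : w ≤ v := by
      rcases List.mem_cons.1 hw with rfl | hw'
      · exact le_refl _
      · exact le_of_lt (List.rel_of_pairwise_cons hsort hw')
    have h2 : 0 < w₀ := hpos w₀ hw₀
    linarith

lemma mem_TL {β r : ℕ} (hβr : β ≤ r) {v : ℤ} {l : List ℤ} {s : Multiset ℤ}
    (h : s ∈ TL β (v :: l)) :
    s ≤ r • ((v :: l : List ℤ) : Multiset ℤ) ∧ Multiset.card s ≤ β := by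
  rw [TL, List.mem_cons] at h
  rcases h with rfl | h
  · exact ⟨Multiset.zero_le _, by simp⟩
  · obtain ⟨c, hc, g, hg, rfl⟩ := mem_shiftRep h
    obtain ⟨w, hw, rfl⟩ : ∃ w ∈ v :: l, g = ({w} : Multiset ℤ) := by
      obtain ⟨w, hw, e⟩ := List.mem_map.1 hg
      exact ⟨w, List.mem_reverse.1 hw, e.symm⟩
    constructor
    · exact aux_le (Or.inr ⟨w, hw, rfl⟩) (by omega)
    · simp only [Multiset.card_add, Multiset.card_singleton, Multiset.card_nsmul]
      omega

lemma head?_NC {r β : ℕ} (hr : 1 ≤ r) : ∀ (f : ℕ) (l : List ℤ), (NC r β f l).head? = some 0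
  | 0, [] => rfl
  | 0, v :: l => rfl
  | f+1, [] => rfl
  | f+1, z :: l => by rw [NC]; exact head?_block hr

lemma chain'_NC {r β : ℕ} (hr : 1 ≤ r) (hβ : 1 ≤ β) :
    ∀ (f : ℕ) {l : List ℤ}, l.Pairwise (· > ·) → (∀ x ∈ l, 0 < x) →
      IsChain (fun a b : Multiset ℤ => a.sum < b.sum) (NC r β f l)
  | 0, [], _, _ => by simp [NC, TL]
  | 0, v :: l, hsort, hpos => chain'_TL hβ hsort hpos
  | f+1, [], _, _ => by simp [NC]
  | f+1, z :: l, hsort, hpos => by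
      rw [NC]
      exact chain'_block hr hsort hpos
        (chain'_NC hr hβ f hsort.of_cons (fun x hx => hpos x (List.mem_cons_of_mem _ hx)))
        (head?_NC hr f l)

lemma mem_NC {r β : ℕ} (hr : 1 ≤ r) (hβr : β ≤ r) :
    ∀ (f : ℕ) {l : List ℤ} {s : Multiset ℤ}, s ∈ NC r β f l →
      s ≤ r • (l : Multiset ℤ) ∧ Multiset.card s ≤ r * f + β
  | 0, [], s, h => by
      simp only [NC, TL, List.mem_singleton] at h
      subst h
      exact ⟨Multiset.zero_le _, by simp⟩
  | 0, v :: l, s, h => by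
      obtain ⟨h1, h2⟩ := mem_TL hβr h
      exact ⟨h1, by omega⟩
  | f+1, [], s, h => by
      simp only [NC, List.mem_singleton] at h
      subst h
      exact ⟨Multiset.zero_le _, by simp⟩
  | f+1, z :: l, s, h => by
      rw [NC, List.mem_append] at h
      rcases h with h | h
      · obtain ⟨c, hc, g, hg, rfl⟩ := mem_shiftRep h
        have hcard : Multiset.card g ≤ 1 := by
          rcases mem_G0 hg with rfl | ⟨w, hw, rfl⟩ <;> simp
        constructor
        · refine aux_le ?_ (by omega)
          rcases mem_G0 hg with e | ⟨w, hw, e⟩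
          · exact Or.inl e
          · exact Or.inr ⟨w, List.mem_cons_of_mem _ (List.mem_reverse.1 hw), e⟩
        · simp only [Multiset.card_add, Multiset.card_nsmul, Multiset.card_singleton]
          have : r * (f + 1) + β = r * f + β + r := by ring
          omega
      · obtain ⟨g, hg, rfl⟩ := List.mem_map.1 h
        obtain ⟨h1, h2⟩ := mem_NC hr hβr f hg
        constructor
        · rw [smul_coe_cons, add_comm (r • ({z} : Multiset ℤ))]
          exact add_le_add_left h1 _
        · simp only [Multiset.card_add, Multiset.card_nsmul, Multiset.card_singleton]
          have : r * (f + 1) + β = r * f + β + r * 1 := by ring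
          omega

lemma length_NC {r β d : ℕ} (hd : 1 ≤ d) :
    ∀ (f : ℕ) {l : List ℤ}, l.length = f + d →
      (NC r β f l).length + r * Tri d = r * Tri (f + d) + β * d + 1
  | 0, [], hl => by simp at hl; omega
  | 0, v :: l, hl => by
      have hlen : (v :: l).length = d := by simpa using hl
      have hlen2 : l.length + 1 = d := by simpa using hl
      simp only [NC, TL, List.length_cons, length_shiftRep, List.length_map,
        List.length_reverse, hlen2]
      have : (0 : ℕ) + d = d := by omega
      rw [this]
      ring
  | f+1, [], hl => by simp at hl; omega
  | f+1, z :: l, hl => by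
      have hl' : l.length = f + d := by simp at hl; omega
      have IH := length_NC (r := r) (β := β) hd f hl'
      simp only [NC, List.length_append, List.length_map, length_shiftRep, G0,
        List.length_cons, List.length_reverse, hl']
      have h1 : f + 1 + d = (f + d) + 1 := by omega
      rw [h1]
      show _ = r * (Tri (f+d) + (f+d+1)) + β * d + 1
      rw [mul_add]
      linarith

lemma chain'_imp_mem {α : Type*} {R S : α → α → Prop} :
    ∀ {l : List α}, IsChain R l → (∀ a ∈ l, ∀ b ∈ l, R a b → S a b) → IsChain S l
  | [], _, _ => List.IsChain.nil
  | [a], _, _ => by simp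
  | a :: b :: t, h, H => by
      rw [List.isChain_cons_cons] at h ⊢
      refine ⟨H a (by simp) b (by simp) h.1, ?_⟩
      exact chain'_imp_mem h.2 (fun x hx y hy hR =>
        H x (List.mem_cons_of_mem _ hx) y (List.mem_cons_of_mem _ hy) hR)

end SigmaChain

open SigmaChain in
theorem stmt_16 (n p r α m : ℕ) (hn : 1 ≤ n) (hp : 1 ≤ p) (hr : 1 ≤ r)
    (A : Finset ℤ) (hcard : A.card = n + p)
    (hneg : (A.filter (fun x => x < 0)).card = n)
    (hpos : (A.filter (fun x => 0 < x)).card = p)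
    (h0 : (0 : ℤ) ∉ A)
    (hα : α ≤ r * (n + p) - 1) (hm1 : 1 ≤ m) (hmk : m ≤ n + p)
    (hml : (m - 1) * r ≤ α) (hmu : α < m * r)
    (hmn : m ≤ n) (hmp : p < m) :
    ((sigmaSeqAtLeast A r α).card : ℤ) ≥
      (r : ℤ) * ((n : ℤ) * ((n : ℤ) + 1) / 2 + (p : ℤ) * ((p : ℤ) + 1) / 2
          - ((m : ℤ) - (p : ℤ)) * ((m : ℤ) - (p : ℤ) + 1) / 2)
        + ((m : ℤ) - (p : ℤ)) * ((m : ℤ) * (r : ℤ) - (α : ℤ)) + 1 := by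
  classical
  set Xneg := A.filter (fun x => x < 0) with hXdef
  set Ypos := A.filter (fun x => 0 < x) with hYdef
  set MR := m * r with hMRdef
  set M1 := (m - 1) * r with hM1def
  have hsumM : M1 + r = MR := by
    rw [hM1def, hMRdef]
    conv_rhs => rw [show m = m - 1 + 1 by omega]
    ring
  set d := m - p with hddef
  set β := MR - α with hβdef
  set f := n - d with hfdef
  have hd1 : 1 ≤ d := by omega
  have hβ1 : 1 ≤ β := by omega
  have hβr : β ≤ r := by omega
  have hdn : d ≤ n := by omega
  have hfd : f + d = n := by omega
  have hMRrn : MR ≤ r * n := by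
    rw [hMRdef, mul_comm]
    exact Nat.mul_le_mul_left r hmn
  have hrdp : r * d + r * p = MR := by
    rw [hMRdef, ← mul_add, show d + p = m by omega, mul_comm]
  have hrfd : r * f + r * d = r * n := by
    rw [← mul_add, hfd]
  -- lists
  set lasc := Xneg.sort (· ≤ ·) with hlascdef
  set lu := lasc.map (fun x => -x) with hludef
  set lpos := (Ypos.sort (· ≤ ·)).reverse with hlposdef
  have hXcard : Multiset.card Xneg.val = n := hneg
  have hYcard : Multiset.card Ypos.val = p := hpos
  have F1 : lpos.Pairwise (· > ·) := by
    rw [hlposdef]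
    exact List.pairwise_reverse.2 (Finset.sortedLT_sort Ypos).pairwise
  have F2 : ∀ x ∈ lpos, 0 < x := by
    intro x hx
    rw [hlposdef, List.mem_reverse, Finset.mem_sort] at hx
    exact (Finset.mem_filter.1 hx).2
  have F3 : ((lpos : List ℤ) : Multiset ℤ) = Ypos.val := by
    rw [hlposdef, Multiset.coe_reverse, Finset.sort_eq]
  have F4 : lu.Pairwise (· > ·) := by
    rw [hludef]
    exact List.Pairwise.map _ (fun a b (h : a < b) => by show (-a) > (-b); omega)
      (Finset.sortedLT_sort Xneg).pairwise
  have F5 : ∀ x ∈ lu, 0 < x := by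
    intro x hx
    rw [hludef] at hx
    obtain ⟨a, ha, rfl⟩ := List.mem_map.1 hx
    rw [hlascdef, Finset.mem_sort] at ha
    have := (Finset.mem_filter.1 ha).2
    omega
  have F6 : Multiset.map (fun u => -u) ((lu : List ℤ) : Multiset ℤ) = Xneg.val := by
    rw [hludef, ← Multiset.map_coe, Multiset.map_map]
    simp [hlascdef, Finset.sort_eq]
  have F7 : lu.length = n := by
    rw [hludef, List.length_map, hlascdef, Finset.length_sort]
    exact hneg
  have F8 : lu.length = f + d := by rw [F7]; omega
  have hlposlen : lpos.length = p := by
    rw [hlposdef, List.length_reverse, Finset.length_sort]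
    exact hpos
  have hval : Xneg.val + Ypos.val = A.val := by
    have h1 : Ypos.val = Multiset.filter (fun x => ¬ x < 0) A.val := by
      rw [hYdef, Finset.filter_val]
      refine Multiset.filter_congr ?_
      intro x hx
      have hx' : x ∈ A := hx
      have : x ≠ 0 := fun e => h0 (e ▸ hx')
      constructor <;> intro <;> omega
    rw [hXdef, Finset.filter_val, h1, Multiset.filter_add_not]
  -- global chain
  set fmap := fun Rm => (r • Xneg.val - Multiset.map (fun u => -u) Rm) + r • Ypos.val with hfmapdef
  set GCh := ((Pch r lpos).map (· + r • Xneg.val)) ++ ((NC r β f lu).tail.map fmap) with hGChdef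
  -- sums of tail states
  have hsum_fmap : ∀ Rm, Rm ≤ r • ((lu : List ℤ) : Multiset ℤ) →
      (fmap Rm).sum = (r • Xneg.val).sum + Rm.sum + (r • Ypos.val).sum := by
    intro Rm hle
    have hmle : Multiset.map (fun u => -u) Rm ≤ r • Xneg.val := by
      have := Multiset.map_le_map (f := fun u => -u) hle
      rwa [Multiset.map_nsmul, F6] at this
    have hcancel := tsub_add_cancel_of_le hmle
    have hsum := congrArg Multiset.sum hcancel
    rw [Multiset.sum_add] at hsum
    have hmapsum : (Multiset.map (fun u => -u) Rm).sum = -Rm.sum := by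
      simpa using Multiset.sum_map_neg (m := Rm) (f := id)
    rw [hfmapdef]
    simp only [Multiset.sum_add]
    omega
  -- membership
  have hmemGCh : ∀ s ∈ GCh, s.sum ∈ sigmaSeqAtLeast A r α := by
    intro s hs
    have hsub : s ≤ r • A.val ∧ α ≤ Multiset.card s := by
      rcases List.mem_append.1 hs with h | h
      · obtain ⟨g, hg, rfl⟩ := List.mem_map.1 h
        have hg' : g ≤ r • Ypos.val := F3 ▸ mem_Pch_le hr hg
        constructor
        · rw [← hval, smul_add, add_comm (r • Xneg.val)]
          exact add_le_add_left hg' _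
        · have : Multiset.card (g + r • Xneg.val) = Multiset.card g + r * n := by
            rw [Multiset.card_add, Multiset.card_nsmul, hXcard]
          omega
      · obtain ⟨Rm, hRm, rfl⟩ := List.mem_map.1 h
        have hRm' : Rm ∈ NC r β f lu := List.mem_of_mem_tail hRm
        obtain ⟨hle, hcard⟩ := mem_NC hr hβr f hRm'
        have hmle : Multiset.map (fun u => -u) Rm ≤ r • Xneg.val := by
          have := Multiset.map_le_map (f := fun u => -u) hle
          rwa [Multiset.map_nsmul, F6] at this
        constructor
        · rw [← hval, smul_add, hfmapdef]
          exact add_le_add_left (le_trans tsub_le_self (le_refl _)) _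
        · have hcancel := tsub_add_cancel_of_le hmle
          have hc2 := congrArg Multiset.card hcancel
          rw [Multiset.card_add, Multiset.card_nsmul, hXcard] at hc2
          have hcm : Multiset.card (Multiset.map (fun u => -u) Rm) = Multiset.card Rm := by
            simp
          have hctot : Multiset.card (fmap Rm) =
              Multiset.card (r • Xneg.val - Multiset.map (fun u => -u) Rm) + r * p := by
            rw [hfmapdef]
            simp only [Multiset.card_add, Multiset.card_nsmul, hYcard]
          rw [hctot]
          have hαβ : α + β = MR := by omega
          have h9 : Multiset.card (r • Xneg.val - Multiset.map (fun u => -u) Rm)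
              + Multiset.card Rm = r * n := by omega
          linarith
    rw [sigmaSeqAtLeast]
    simp only [Multiset.mem_toFinset, Multiset.mem_map]
    exact ⟨s, by rw [Multiset.mem_filter, Multiset.mem_powerset]; exact ⟨hsub.1, hsub.2⟩, rfl⟩
  -- the chain property
  have hchPch := chain'_Pch hr F1 F2
  have hchNC := chain'_NC hr hβ1 f F4 F5
  have hheadNC := head?_NC (r := r) (β := β) hr f lu
  have hch : List.IsChain (fun a b : Multiset ℤ => a.sum < b.sum) GCh := by
    rw [hGChdef, List.isChain_append]
    refine ⟨?_, ?_, ?_⟩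
    · rw [List.isChain_map]
      exact hchPch.imp (fun {a b} h => by simp only [Multiset.sum_add]; omega)
    · rw [List.isChain_map]
      refine chain'_imp_mem hchNC.tail ?_
      intro a ha b hb hab
      rw [hsum_fmap a (mem_NC hr hβr f (List.mem_of_mem_tail ha)).1,
          hsum_fmap b (mem_NC hr hβr f (List.mem_of_mem_tail hb)).1]
      omega
    · intro x hx y hy
      rw [List.getLast?_map, getLast?_Pch] at hx
      simp only [Option.map_some, Option.mem_def, Option.some.injEq] at hx
      subst hx
      rw [List.head?_map] at hy
      cases hNC : NC r β f lu with
      | nil => rw [hNC] at hheadNC; simp at hheadNC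
      | cons a t =>
          rw [hNC] at hheadNC
          simp only [List.head?_cons, Option.some.injEq] at hheadNC
          subst hheadNC
          rw [hNC] at hy
          cases t with
          | nil => simp at hy
          | cons b t' =>
              simp only [List.tail_cons, List.head?_cons, Option.map_some, Option.mem_def,
                Option.some.injEq] at hy
              subst hy
              have hbmem : b ∈ NC r β f lu := by
                rw [hNC]; exact List.mem_cons_of_mem _ (List.mem_cons_self)
              have hbsum : (0 : ℤ) < b.sum := by
                have hc := hchNC
                rw [hNC, List.isChain_cons_cons] at hc
                simpa using hc.1
              rw [hsum_fmap b (mem_NC hr hβr f hbmem).1]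
              rw [Multiset.sum_add, F3]
              linarith
  -- distinct sums, cardinality bound
  have hchS : List.IsChain (· < ·) (GCh.map Multiset.sum) := (List.isChain_map _).2 hch
  have hpw : (GCh.map Multiset.sum).Pairwise (· < ·) := List.isChain_iff_pairwise.1 hchS
  have hnd : (GCh.map Multiset.sum).Nodup := hpw.imp (fun h => ne_of_lt h)
  have hsubF : (GCh.map Multiset.sum).toFinset ⊆ sigmaSeqAtLeast A r α := by
    intro z hz
    rw [List.mem_toFinset] at hz
    obtain ⟨s, hs, rfl⟩ := List.mem_map.1 hz
    exact hmemGCh s hs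
  have hcard2 : GCh.length ≤ (sigmaSeqAtLeast A r α).card := by
    have h1 : (GCh.map Multiset.sum).toFinset.card = GCh.length := by
      rw [List.toFinset_card_of_nodup hnd, List.length_map]
    calc GCh.length = (GCh.map Multiset.sum).toFinset.card := h1.symm
      _ ≤ _ := Finset.card_le_card hsubF
  -- lengths
  have hNCne : NC r β f lu ≠ [] := by
    intro e; rw [e] at hheadNC; simp at hheadNC
  have hNCpos : 1 ≤ (NC r β f lu).length := List.length_pos_iff.2 hNCne
  have hlenNC : (NC r β f lu).length + r * Tri d = r * Tri n + β * d + 1 := by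
    have h := length_NC (r := r) (β := β) hd1 f F8
    rwa [hfd] at h
  have hlenGCh : GCh.length = (r * Tri p + 1) + ((NC r β f lu).length - 1) := by
    rw [hGChdef, List.length_append, List.length_map, List.length_map, List.length_tail,
      length_Pch, hlposlen]
  have htarget : r * Tri n + r * Tri p + β * d + 1 ≤ (sigmaSeqAtLeast A r α).card + r * Tri d := by
    set q2 := r * Tri n with hq2
    set q3 := r * Tri p with hq3
    set q4 := r * Tri d with hq4
    set q5 := β * d with hq5
    omega
  -- final integer arithmetic
  have e1 : (n : ℤ) * ((n : ℤ) + 1) / 2 = (Tri n : ℤ) := by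
    have h2 : (n : ℤ) * ((n : ℤ) + 1) = 2 * (Tri n : ℤ) := by
      have h3 : ((2 * Tri n : ℕ) : ℤ) = (((n : ℕ) * (n + 1) : ℕ) : ℤ) := by rw [two_Tri n]
      push_cast at h3
      linarith
    rw [h2, Int.mul_ediv_cancel_left _ (by norm_num)]
  have e2 : (p : ℤ) * ((p : ℤ) + 1) / 2 = (Tri p : ℤ) := by
    have h2 : (p : ℤ) * ((p : ℤ) + 1) = 2 * (Tri p : ℤ) := by
      have h3 : ((2 * Tri p : ℕ) : ℤ) = (((p : ℕ) * (p + 1) : ℕ) : ℤ) := by rw [two_Tri p]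
      push_cast at h3
      linarith
    rw [h2, Int.mul_ediv_cancel_left _ (by norm_num)]
  have edp : (m : ℤ) - (p : ℤ) = (d : ℤ) := by omega
  have e3 : (d : ℤ) * ((d : ℤ) + 1) / 2 = (Tri d : ℤ) := by
    have h2 : (d : ℤ) * ((d : ℤ) + 1) = 2 * (Tri d : ℤ) := by
      have h3 : ((2 * Tri d : ℕ) : ℤ) = (((d : ℕ) * (d + 1) : ℕ) : ℤ) := by rw [two_Tri d]
      push_cast at h3
      linarith
    rw [h2, Int.mul_ediv_cancel_left _ (by norm_num)]
  have eβ : (m : ℤ) * (r : ℤ) - (α : ℤ) = (β : ℤ) := by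
    have hMRZ : ((MR : ℕ) : ℤ) = (m : ℤ) * r := by rw [hMRdef]; push_cast; ring
    rw [← hMRZ]
    omega
  rw [ge_iff_le, edp, eβ, e1, e2, e3]
  have hT : ((r * Tri n + r * Tri p + β * d + 1 : ℕ) : ℤ) ≤
      (((sigmaSeqAtLeast A r α).card + r * Tri d : ℕ) : ℤ) := by exact_mod_cast htarget
  push_cast at hT
  linarith
end
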